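/- arXiv:1902.06957 — 8 statements merged into one kernel-verified Lean document; each statement's English description precedes it below -/
import Mathlib

section
/- Let A be a matrix over GF(2) with finite row index set V and finite column index set E, let M be the binary matroid on ground set E represented by A, let T ⊆ E, and let k be a non-negative integer. Then a set F ⊆ E∖T satisfies |F| ≤ k and T ⊆ span(F) in the dual matroid M* (i.e., every element of T lies in the closure of F in M*) if and only if |F| ≤ k and for every W ∈ T there exists a subset F_W ⊆ F such that the characteristic vector of F_W ∪ {W} lies in the span over GF(2) of the set of rows of A. -/
open Matrix

variable {V E : Type*}

/-- The columns of `A` indexed by the set `S` are linearly independent over GF(2);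
this is the independence predicate of the binary matroid `M` represented by `A`. -/
def ColIndep (A : Matrix V E (ZMod 2)) (S : Set E) : Prop :=
  LinearIndependent (ZMod 2) (fun e : S => (Aᵀ e.1 : V → ZMod 2))

/-- A base of the binary matroid represented by `A`: a maximal independent set of columns. -/
def IsBase (A : Matrix V E (ZMod 2)) (B : Set E) : Prop :=
  ColIndep A B ∧ ∀ S : Set E, ColIndep A S → B ⊆ S → S = B

/-- A set is independent in the dual matroid `M*` iff it is disjoint from some base of `M`. -/
def DualIndep (A : Matrix V E (ZMod 2)) (S : Set E) : Prop :=
  ∃ B : Set E, IsBase A B ∧ Disjoint S B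

/-- The rank of a set `S` in the dual matroid `M*`: the maximum size of an
`M*`-independent subset of `S`. -/
noncomputable def DualRank (A : Matrix V E (ZMod 2)) (S : Set E) : ℕ :=
  sSup (Set.ncard '' {I : Set E | I ⊆ S ∧ DualIndep A I})

/-- The closure (span) of a set `F` in the dual matroid `M*`: the set of elements whose
addition to `F` does not increase its rank in `M*`. -/
noncomputable def DualClosure (A : Matrix V E (ZMod 2)) (F : Set E) : Set E :=
  {e : E | DualRank A (insert e F) = DualRank A F}

/-- The characteristic vector of a set `F ⊆ E`, as a vector in GF(2)^E. -/
noncomputable def charVec (F : Set E) : E → ZMod 2 := F.indicator 1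

set_option linter.unusedSectionVars false

noncomputable def BMspan (A : Matrix V E (ZMod 2)) (X : Set E) :
    Submodule (ZMod 2) (V → ZMod 2) := Submodule.span (ZMod 2) ((fun e => Aᵀ e) '' X)

noncomputable def BMrk (A : Matrix V E (ZMod 2)) (X : Set E) : ℕ :=
  Module.finrank (ZMod 2) (BMspan A X)

section Aux
variable [Fintype V] [Fintype E] (A : Matrix V E (ZMod 2))

lemma BMspan_mono {X Y : Set E} (h : X ⊆ Y) : BMspan A X ≤ BMspan A Y :=
  Submodule.span_mono (Set.image_mono h)

lemma BMrk_mono {X Y : Set E} (h : X ⊆ Y) : BMrk A X ≤ BMrk A Y :=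
  Submodule.finrank_mono (BMspan_mono A h)

lemma BMrk_le_ncard (X : Set E) : BMrk A X ≤ X.ncard := by
  classical
  haveI := (Set.toFinite (Aᵀ '' X)).fintype
  refine le_trans (finrank_span_le_card (R := ZMod 2) (Aᵀ '' X)) ?_
  rw [← Set.ncard_eq_toFinset_card']
  exact Set.ncard_image_le (Set.toFinite X)

lemma BMrk_union_le (X Y : Set E) : BMrk A (X ∪ Y) ≤ BMrk A X + BMrk A Y := by
  have h : BMspan A (X ∪ Y) = BMspan A X ⊔ BMspan A Y := by
    rw [BMspan, Set.image_union, Submodule.span_union]; rfl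
  rw [BMrk, h]
  calc Module.finrank (ZMod 2) ↥(BMspan A X ⊔ BMspan A Y)
      ≤ Module.finrank (ZMod 2) ↥(BMspan A X ⊔ BMspan A Y)
        + Module.finrank (ZMod 2) ↥(BMspan A X ⊓ BMspan A Y) := Nat.le_add_right _ _
    _ = _ := Submodule.finrank_sup_add_finrank_inf_eq _ _

lemma BMrk_insert_of_not_mem {X : Set E} {e : E} (h : Aᵀ e ∉ BMspan A X) :
    BMrk A (insert e X) = BMrk A X + 1 := by
  have hspan : BMspan A (insert e X) =
      (Submodule.span (ZMod 2) {Aᵀ e}) ⊔ BMspan A X := by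
    rw [BMspan, Set.image_insert_eq, Submodule.span_insert]; rfl
  have hne : Aᵀ e ≠ 0 := fun h0 => h (h0 ▸ Submodule.zero_mem _)
  have hinf : (Submodule.span (ZMod 2) {Aᵀ e}) ⊓ BMspan A X = ⊥ := by
    rw [eq_bot_iff]
    rintro x ⟨hx1, hx2⟩
    obtain ⟨c, rfl⟩ := Submodule.mem_span_singleton.1 hx1
    rcases eq_or_ne c 0 with rfl | hc
    · simp
    · exact absurd (by simpa [smul_smul, inv_mul_cancel₀ hc] using
        Submodule.smul_mem _ c⁻¹ hx2) h
  have := Submodule.finrank_sup_add_finrank_inf_eq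
    (Submodule.span (ZMod 2) {Aᵀ e}) (BMspan A X)
  rw [hinf] at this
  simp only [finrank_bot, add_zero] at this
  rw [BMrk, hspan, this, finrank_span_singleton hne, add_comm]
  rfl

lemma BMrk_insert_of_mem {X : Set E} {e : E} (h : Aᵀ e ∈ BMspan A X) :
    BMrk A (insert e X) = BMrk A X := by
  rw [BMrk, BMspan, Set.image_insert_eq, Submodule.span_insert_eq_span h]; rfl

lemma ColIndep.mono {S S' : Set E} (h : ColIndep A S) (hsub : S' ⊆ S) : ColIndep A S' :=
  h.comp (Set.inclusion hsub) (Set.inclusion_injective hsub)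

lemma ColIndep.ncard_eq {B : Set E} (h : ColIndep A B) : B.ncard = BMrk A B := by
  classical
  haveI : Fintype B := (Set.toFinite B).fintype
  have : BMspan A B = Submodule.span (ZMod 2) (Set.range fun e : B => Aᵀ e.1) := by
    rw [BMspan, Set.image_eq_range]
  rw [BMrk, this, finrank_span_eq_card h, Set.ncard_eq_toFinset_card', Set.toFinset_card]

lemma colIndep_empty : ColIndep A (∅ : Set E) := by
  rw [ColIndep]
  exact linearIndependent_empty_type

/-- Existence of a maximal independent set between `I₀` and `X`. -/

lemma exists_max_indep {I₀ X : Set E} (hI₀X : I₀ ⊆ X) (hI₀ : ColIndep A I₀) :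
    ∃ B : Set E, I₀ ⊆ B ∧ B ⊆ X ∧ ColIndep A B ∧
      (∀ S : Set E, S ⊆ X → ColIndep A S → B ⊆ S → S = B) ∧
      BMspan A B = BMspan A X := by
  classical
  set 𝒮 : Set (Set E) := {B | I₀ ⊆ B ∧ B ⊆ X ∧ ColIndep A B} with h𝒮
  have hfin : 𝒮.Finite := Set.toFinite _
  obtain ⟨B, hB, hBmax⟩ := hfin.exists_maximalFor Set.ncard 𝒮 ⟨I₀, le_refl _, hI₀X, hI₀⟩
  obtain ⟨hI₀B, hBX, hBind⟩ := hB
  have hmax : ∀ S : Set E, S ⊆ X → ColIndep A S → B ⊆ S → S = B := by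
    intro S hSX hSind hBS
    have hS : S ∈ 𝒮 := ⟨hI₀B.trans hBS, hSX, hSind⟩
    have hcard := hBmax hS (Set.ncard_le_ncard hBS (Set.toFinite S))
    exact (Set.eq_of_subset_of_ncard_le hBS hcard (Set.toFinite S)).symm
  refine ⟨B, hI₀B, hBX, hBind, hmax, le_antisymm (BMspan_mono A hBX) ?_⟩
  rw [BMspan, Submodule.span_le]
  rintro _ ⟨e, heX, rfl⟩
  by_cases heB : e ∈ B
  · exact Submodule.subset_span ⟨e, heB, rfl⟩
  · by_contra hnot
    have hins : ColIndep A (insert e B) :=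
      (linearIndepOn_insert (f := fun e => Aᵀ e) heB).2 ⟨hBind, hnot⟩
    have := hmax (insert e B) (Set.insert_subset heX hBX) hins (Set.subset_insert e B)
    exact heB (this ▸ Set.mem_insert e B)

lemma exists_base_extending {I₀ : Set E} (hI₀ : ColIndep A I₀) :
    ∃ B : Set E, I₀ ⊆ B ∧ IsBase A B ∧ BMspan A B = BMspan A Set.univ := by
  obtain ⟨B, h1, _, h3, h4, h5⟩ := exists_max_indep A (Set.subset_univ I₀) hI₀
  exact ⟨B, h1, ⟨h3, fun S hS hBS => h4 S (Set.subset_univ S) hS hBS⟩, h5⟩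

lemma IsBase.span_eq {B : Set E} (hB : IsBase A B) : BMspan A B = BMspan A Set.univ := by
  refine le_antisymm (BMspan_mono A (Set.subset_univ B)) ?_
  rw [BMspan, Submodule.span_le]
  rintro _ ⟨e, -, rfl⟩
  by_cases heB : e ∈ B
  · exact Submodule.subset_span ⟨e, heB, rfl⟩
  · by_contra hnot
    have hins : ColIndep A (insert e B) :=
      (linearIndepOn_insert (f := fun e => Aᵀ e) heB).2 ⟨hB.1, hnot⟩
    exact heB ((hB.2 _ hins (Set.subset_insert e B)) ▸ Set.mem_insert e B)

lemma IsBase.ncard_eq {B : Set E} (hB : IsBase A B) : B.ncard = BMrk A Set.univ := by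
  rw [hB.1.ncard_eq A, BMrk, hB.span_eq A]; rfl

lemma dualRank_add_eq (S : Set E) :
    DualRank A S + BMrk A Set.univ = S.ncard + BMrk A Sᶜ := by
  classical
  obtain ⟨B₀, -, hB₀Sc, hB₀ind, hB₀max, hB₀span⟩ :=
    exists_max_indep A (Set.empty_subset Sᶜ) (colIndep_empty A)
  obtain ⟨B, hB₀B, hBbase, hBspan⟩ := exists_base_extending A hB₀ind
  have hBSc : B ∩ Sᶜ = B₀ :=
    hB₀max (B ∩ Sᶜ) Set.inter_subset_right
      ((hBbase.1).mono A Set.inter_subset_left)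
      (Set.subset_inter hB₀B hB₀Sc)
  have hB₀card : B₀.ncard = BMrk A Sᶜ := by
    rw [hB₀ind.ncard_eq A, BMrk, hB₀span]; rfl
  have hBcard : B.ncard = BMrk A Set.univ := hBbase.ncard_eq A
  -- the witness
  set n₀ := (S \ B).ncard with hn₀
  have hpartB : (B ∩ Sᶜ).ncard + (B \ Sᶜ).ncard = B.ncard :=
    Set.ncard_inter_add_ncard_diff_eq_ncard B Sᶜ
  have hdc : B \ Sᶜ = S ∩ B := by ext e; simp [Set.mem_diff]; tauto
  have hpartS : (S ∩ B).ncard + (S \ B).ncard = S.ncard :=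
    Set.ncard_inter_add_ncard_diff_eq_ncard S B
  have hkey : n₀ + BMrk A Set.univ = S.ncard + BMrk A Sᶜ := by
    rw [hBSc, hdc] at hpartB
    omega
  -- n₀ is attained
  have hmem : n₀ ∈ Set.ncard '' {I : Set E | I ⊆ S ∧ DualIndep A I} :=
    ⟨S \ B, ⟨Set.diff_subset, B, hBbase, Set.disjoint_sdiff_left⟩, rfl⟩
  -- upper bound
  have hub : ∀ n ∈ Set.ncard '' {I : Set E | I ⊆ S ∧ DualIndep A I}, n ≤ n₀ := by
    rintro _ ⟨I, ⟨hIS, B', hB'base, hdisj⟩, rfl⟩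
    have hB'c : B' ⊆ Iᶜ := Set.subset_compl_iff_disjoint_left.2 hdisj
    have h1 : BMrk A Set.univ ≤ BMrk A Iᶜ := by
      have : BMrk A B' = BMrk A Set.univ := by
        rw [BMrk, hB'base.span_eq A]; rfl
      rw [← this]; exact BMrk_mono A hB'c
    have h2 : Iᶜ ⊆ Sᶜ ∪ (S \ I) := by
      intro e he
      by_cases heS : e ∈ S
      · exact Or.inr ⟨heS, he⟩
      · exact Or.inl heS
    have h3 : BMrk A Iᶜ ≤ BMrk A Sᶜ + (S \ I).ncard :=
      le_trans (BMrk_mono A h2) (le_trans (BMrk_union_le A _ _)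
        (by exact Nat.add_le_add_left (BMrk_le_ncard A _) _))
    have h4 : (S ∩ I).ncard + (S \ I).ncard = S.ncard :=
      Set.ncard_inter_add_ncard_diff_eq_ncard S I
    have h5 : S ∩ I = I := Set.inter_eq_self_of_subset_right hIS
    rw [h5] at h4
    omega
  have : DualRank A S = n₀ :=
    le_antisymm (csSup_le ⟨n₀, hmem⟩ hub) (le_csSup ⟨n₀, hub⟩ hmem)
  rw [this]; exact hkey

lemma mem_dualClosure_iff {F : Set E} {W : E} (hW : W ∉ F) :
    W ∈ DualClosure A F ↔ Aᵀ W ∉ BMspan A (Fᶜ \ {W}) := by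
  have h1 := dualRank_add_eq A (insert W F)
  have h2 := dualRank_add_eq A F
  have hC : (insert W F)ᶜ = Fᶜ \ {W} := by
    ext e; simp only [Set.mem_compl_iff, Set.mem_insert_iff, Set.mem_diff,
      Set.mem_singleton_iff, not_or]; tauto
  have hF : Fᶜ = insert W (Fᶜ \ {W}) := by
    ext e; by_cases he : e = W <;> simp [he, hW]
  have hcard : (insert W F).ncard = F.ncard + 1 :=
    Set.ncard_insert_of_notMem hW (Set.toFinite F)
  rw [hC, hcard] at h1
  have hmemiff : W ∈ DualClosure A F ↔ DualRank A (insert W F) = DualRank A F :=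
    Iff.rfl
  rw [hmemiff]
  by_cases hmem : Aᵀ W ∈ BMspan A (Fᶜ \ {W})
  · have : BMrk A Fᶜ = BMrk A (Fᶜ \ {W}) := by
      conv_lhs => rw [hF]
      exact BMrk_insert_of_mem A hmem
    rw [this] at h2
    simp only [iff_false, hmem, not_true_eq_false, iff_false]
    omega
  · have : BMrk A Fᶜ = BMrk A (Fᶜ \ {W}) + 1 := by
      conv_lhs => rw [hF]
      exact BMrk_insert_of_not_mem A hmem
    rw [this] at h2
    simp only [hmem, not_false_eq_true, iff_true]
    omega

lemma not_mem_span_iff_charVec {F : Set E} {W : E} (hW : W ∉ F) :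
    Aᵀ W ∉ BMspan A (Fᶜ \ {W}) ↔
      ∃ FW ⊆ F, charVec (insert W FW) ∈
        Submodule.span (ZMod 2) (Set.range fun v : V => A v) := by
  classical
  constructor
  · intro h
    obtain ⟨f, hfW, hker⟩ :=
      Submodule.exists_dual_map_eq_bot_of_notMem h inferInstance
    have hker' : ∀ x ∈ BMspan A (Fᶜ \ {W}), f x = 0 := by
      intro x hx
      have : f x ∈ (BMspan A (Fᶜ \ {W})).map f := Submodule.mem_map_of_mem hx
      rwa [hker, Submodule.mem_bot] at this
    set x : E → ZMod 2 := fun e => f (Aᵀ e) with hx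
    have hx0 : ∀ e, e ∉ F → e ≠ W → x e = 0 := fun e he hne =>
      hker' _ (Submodule.subset_span ⟨e, ⟨he, hne⟩, rfl⟩)
    have hxW : x W = 1 := by
      have : x W ≠ 0 := hfW
      revert this; generalize x W = a; revert a; decide
    refine ⟨{e | e ∈ F ∧ x e = 1}, fun e he => he.1, ?_⟩
    have hcv : charVec (insert W {e | e ∈ F ∧ x e = 1}) = x := by
      funext e
      by_cases he : e ∈ insert W {e | e ∈ F ∧ x e = 1}
      · rw [charVec, Set.indicator_of_mem he, Pi.one_apply]
        rcases he with rfl | ⟨-, hx1⟩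
        · exact hxW.symm
        · exact hx1.symm
      · rw [charVec, Set.indicator_of_notMem he]
        simp only [Set.mem_insert_iff, Set.mem_setOf_eq, not_or] at he
        obtain ⟨hneW, hnotin⟩ := he
        by_cases heF : e ∈ F
        · have : x e ≠ 1 := fun h1 => hnotin ⟨heF, h1⟩
          revert this; generalize x e = a; revert a; decide
        · exact (hx0 e heF hneW).symm
    rw [hcv, Submodule.mem_span_range_iff_exists_fun]
    refine ⟨fun v => f (fun j => if v = j then 1 else 0), ?_⟩
    funext e
    show _ = f (Aᵀ e)
    rw [LinearMap.pi_apply_eq_sum_univ f (Aᵀ e), Finset.sum_apply]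
    exact Finset.sum_congr rfl fun v _ => by
      simp [smul_eq_mul, mul_comm, transpose_apply]
  · rintro ⟨FW, hFWF, hmem⟩ h
    rw [Submodule.mem_span_range_iff_exists_fun] at hmem
    obtain ⟨c, hc⟩ := hmem
    set f : (V → ZMod 2) →ₗ[ZMod 2] ZMod 2 :=
      ∑ v : V, c v • LinearMap.proj v with hf
    have hfe : ∀ e : E, f (Aᵀ e) = charVec (insert W FW) e := by
      intro e
      rw [← hc]
      simp [hf, LinearMap.sum_apply, LinearMap.smul_apply, LinearMap.proj_apply,
        smul_eq_mul, Finset.sum_apply]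
    have hspan : BMspan A (Fᶜ \ {W}) ≤ LinearMap.ker f := by
      rw [BMspan, Submodule.span_le]
      rintro _ ⟨e, ⟨heF, hneW⟩, rfl⟩
      rw [SetLike.mem_coe, LinearMap.mem_ker, hfe]
      rw [charVec, Set.indicator_of_notMem]
      rintro (rfl | heFW)
      · exact hneW rfl
      · exact heF (hFWF heFW)
    have h1 : f (Aᵀ W) = 1 := by
      rw [hfe, charVec, Set.indicator_of_mem (Set.mem_insert W FW), Pi.one_apply]
    have h0 : f (Aᵀ W) = 0 := hspan h
    rw [h1] at h0
    exact one_ne_zero h0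


end Aux

/-- Let `M` be the binary matroid represented by `A`, `T ⊆ E`, `k ∈ ℕ`,
and let `F ⊆ E ∖ T`. Then `|F| ≤ k` and `T ⊆ span(F)` in the dual matroid `M*` if and only
if `|F| ≤ k` and for every `W ∈ T` there is `F_W ⊆ F` such that the characteristic vector
of `F_W ∪ {W}` lies in the GF(2)-span of the rows of `A`. -/
theorem dual_span_iff_charVec_mem_rowSpan
    [Fintype V] [Fintype E] (A : Matrix V E (ZMod 2)) (T : Set E) (k : ℕ)
    (F : Set E) (hFT : Disjoint F T) :
    (F.ncard ≤ k ∧ T ⊆ DualClosure A F) ↔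
      (F.ncard ≤ k ∧ ∀ W ∈ T, ∃ FW ⊆ F,
        charVec (insert W FW) ∈ Submodule.span (ZMod 2) (Set.range fun v : V => A v)) := by
  have key : ∀ W ∈ T, (W ∈ DualClosure A F ↔ ∃ FW ⊆ F,
      charVec (insert W FW) ∈ Submodule.span (ZMod 2) (Set.range fun v : V => A v)) := by
    intro W hWT
    have hWF : W ∉ F := fun hWF => (Set.disjoint_left.mp hFT hWF) hWT
    exact (mem_dualClosure_iff A hWF).trans (not_mem_span_iff_charVec A hWF)
  constructor
  · rintro ⟨hk, h⟩
    exact ⟨hk, fun W hWT => (key W hWT).1 (h hWT)⟩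
  · rintro ⟨hk, h⟩
    exact ⟨hk, fun W hWT => (key W hWT).2 (h W hWT)⟩
end

section
/- Consider an instance of Space Cover on a perturbed graphic matroid: a loopless finite multigraph G, a matrix P over GF(2) with rows indexed by V(G) and columns indexed by E(G), the matrix A = I(G) + P, a terminal set T ⊆ E(G), and a non-negative integer k; let t be the number of distinct columns of P. If there exists a set F ⊆ E(G)∖T with |F| ≤ k such that for every e ∈ T the column A^e lies in the GF(2)-span of {A^f : f ∈ F}, then there exists such a set F with the additional property that the number of cycles of G whose edge set is contained in F is at most 2^t. -/
open Matrix

variable {V E : Type*}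

/-- The incidence matrix over GF(2) of the loopless multigraph with vertex set `V`,
edge set `E` and endpoint maps `x y : E → V`: the entry at `(v, e)` is `1` exactly
when `v` is an endpoint of `e`. -/
def incMatrix [DecidableEq V] (x y : E → V) : Matrix V E (ZMod 2) :=
  fun v e => if v = x e ∨ v = y e then 1 else 0

/-- `v` is incident to the edge `e`. -/
def Incid (x y : E → V) (v : V) (e : E) : Prop := v = x e ∨ v = y e

/-- A cycle of a loopless multigraph: a nonempty set `C` of edges such that every vertex
incident to an edge of `C` is incident to exactly two edges of `C`, and the subgraph formed
by `C` together with its incident vertices is connected. -/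
def IsCycle (x y : E → V) (C : Set E) : Prop :=
  C.Nonempty ∧
  (∀ v : V, (∃ e ∈ C, Incid x y v e) → {e ∈ C | Incid x y v e}.ncard = 2) ∧
  (∀ u v : V, (∃ e ∈ C, Incid x y u e) → (∃ e ∈ C, Incid x y v e) →
    Relation.ReflTransGen
      (fun a b => ∃ e ∈ C, (a = x e ∧ b = y e) ∨ (a = y e ∧ b = x e)) u v)

/-- Space Cover on a perturbed graphic matroid: given a loopless finite
multigraph `G`, a perturbation matrix `P` over GF(2), the matrix `A = I(G) + P`,
terminals `T ⊆ E(G)` and `k ∈ ℕ`, with `t` the number of distinct columns of `P`: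
if some `F ⊆ E(G) ∖ T` with `|F| ≤ k` spans all terminal columns of `A`, then there is
such an `F` for which the number of cycles of `G` whose edge set is contained in `F`
is at most `2 ^ t`. -/
theorem spaceCoverPGM_exists_solution_with_few_cycles
    [Fintype V] [Fintype E] [DecidableEq V]
    (x y : E → V) (hloop : ∀ e : E, x e ≠ y e)
    (P : Matrix V E (ZMod 2)) (T : Set E) (k : ℕ)
    (A : Matrix V E (ZMod 2)) (hA : A = incMatrix x y + P)
    (t : ℕ) (ht : t = (Finset.univ.image (fun e : E => Pᵀ e)).card)
    (hex : ∃ F : Set E, Disjoint F T ∧ F.ncard ≤ k ∧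
      ∀ e ∈ T, Aᵀ e ∈ Submodule.span (ZMod 2) ((fun f : E => Aᵀ f) '' F)) :
    ∃ F : Set E, Disjoint F T ∧ F.ncard ≤ k ∧
      (∀ e ∈ T, Aᵀ e ∈ Submodule.span (ZMod 2) ((fun f : E => Aᵀ f) '' F)) ∧
      {C : Set E | IsCycle x y C ∧ C ⊆ F}.ncard ≤ 2 ^ t := by
  classical
  -- the sum of P-columns over a finite edge set
  set σ : Set E → (V → ZMod 2) := fun C => ∑ e ∈ C.toFinset, Pᵀ e with hσ
  -- incidence columns sum to zero over a cycle
  have hinc : ∀ C : Set E, IsCycle x y C → ∑ e ∈ C.toFinset, (incMatrix x y)ᵀ e = 0 := by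
    intro C hC
    funext v
    rw [show (∑ e ∈ C.toFinset, (incMatrix x y)ᵀ e) v = ∑ e ∈ C.toFinset, (incMatrix x y)ᵀ e v from
      Finset.sum_apply _ _ _]
    simp only [Pi.zero_apply]
    have hterm : ∀ e, ((incMatrix x y)ᵀ e) v = if Incid x y v e then (1 : ZMod 2) else 0 := by
      intro e
      rw [Matrix.transpose_apply]
      exact if_congr Iff.rfl rfl rfl
    simp_rw [hterm]
    rw [Finset.sum_boole]
    have hcard : (C.toFinset.filter (Incid x y v)).card = {e ∈ C | Incid x y v e}.ncard := by
      rw [Set.ncard_eq_toFinset_card']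
      congr 1
      ext e
      simp [Set.mem_toFinset]
    by_cases h : ∃ e ∈ C, Incid x y v e
    · rw [hcard, hC.2.1 v h]
      decide
    · have : C.toFinset.filter (Incid x y v) = ∅ := by
        ext e
        simp only [Finset.mem_filter, Set.mem_toFinset, Finset.notMem_empty, iff_false]
        rintro ⟨he, hi⟩
        exact h ⟨e, he, hi⟩
      rw [this]
      simp
  -- A-columns sum to σ over a cycle
  have hAsum : ∀ C : Set E, IsCycle x y C → ∑ e ∈ C.toFinset, Aᵀ e = σ C := by
    intro C hC
    have hAe : ∀ e, Aᵀ e = (incMatrix x y)ᵀ e + Pᵀ e := by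
      intro e; funext v; simp [hA, Matrix.transpose_apply, Matrix.add_apply]
    simp_rw [hAe]
    rw [show ∑ e ∈ C.toFinset, ((incMatrix x y)ᵀ e + Pᵀ e) = ∑ e ∈ C.toFinset, (incMatrix x y)ᵀ e +
      ∑ e ∈ C.toFinset, Pᵀ e from Finset.sum_add_distrib, hinc C hC, zero_add]
  have h2 : ∀ m : V → ZMod 2, m + m = 0 := by
    intro m; funext v; simp only [Pi.add_apply, Pi.zero_apply]
    exact CharTwo.add_self_eq_zero _
  -- pick a minimum-cardinality solution
  have hne : {n | ∃ F : Set E, (Disjoint F T ∧ F.ncard ≤ k ∧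
      ∀ e ∈ T, Aᵀ e ∈ Submodule.span (ZMod 2) ((fun f : E => Aᵀ f) '' F)) ∧ F.ncard = n}.Nonempty := by
    obtain ⟨F0, h0⟩ := hex
    exact ⟨F0.ncard, F0, h0, rfl⟩
  obtain ⟨F, hF, hFcard⟩ := Nat.sInf_mem hne
  refine ⟨F, hF.1, hF.2.1, hF.2.2, ?_⟩
  -- injectivity of σ on cycles contained in F
  have hinj : Set.InjOn σ {C : Set E | IsCycle x y C ∧ C ⊆ F} := by
    rintro C1 ⟨hC1, hC1F⟩ C2 ⟨hC2, hC2F⟩ heq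
    by_contra hnecc
    have hDF : ∀ g ∈ (C1.toFinset \ C2.toFinset) ∪ (C2.toFinset \ C1.toFinset), g ∈ F := by
      intro g hg
      rcases Finset.mem_union.1 hg with h | h
      · exact hC1F (Set.mem_toFinset.1 (Finset.mem_sdiff.1 h).1)
      · exact hC2F (Set.mem_toFinset.1 (Finset.mem_sdiff.1 h).1)
    have hDsum : ∑ g ∈ (C1.toFinset \ C2.toFinset) ∪ (C2.toFinset \ C1.toFinset), Aᵀ g = 0 := by
      have hdisj : Disjoint (C1.toFinset \ C2.toFinset) (C2.toFinset \ C1.toFinset) :=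
        disjoint_sdiff_sdiff
      have e1 : ∑ g ∈ C1.toFinset \ C2.toFinset, Aᵀ g =
          ∑ g ∈ C1.toFinset, Aᵀ g - ∑ g ∈ C1.toFinset ∩ C2.toFinset, Aᵀ g := by
        rw [← Finset.sdiff_inter_self_left C1.toFinset C2.toFinset]
        exact Finset.sum_sdiff_eq_sub Finset.inter_subset_left
      have e2 : ∑ g ∈ C2.toFinset \ C1.toFinset, Aᵀ g =
          ∑ g ∈ C2.toFinset, Aᵀ g - ∑ g ∈ C1.toFinset ∩ C2.toFinset, Aᵀ g := by
        rw [← Finset.sdiff_inter_self_left C2.toFinset C1.toFinset,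
          Finset.inter_comm C2.toFinset C1.toFinset]
        exact Finset.sum_sdiff_eq_sub Finset.inter_subset_right
      rw [show ∑ g ∈ (C1.toFinset \ C2.toFinset) ∪ (C2.toFinset \ C1.toFinset), Aᵀ g =
        ∑ g ∈ C1.toFinset \ C2.toFinset, Aᵀ g + ∑ g ∈ C2.toFinset \ C1.toFinset, Aᵀ g from
        Finset.sum_union hdisj]
      rw [e1, e2, hAsum C1 hC1, hAsum C2 hC2, ← heq]
      have := h2 (σ C1 - ∑ g ∈ C1.toFinset ∩ C2.toFinset, Aᵀ g)
      exact this
    have hDne : ((C1.toFinset \ C2.toFinset) ∪ (C2.toFinset \ C1.toFinset)).Nonempty := by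
      rw [Finset.nonempty_iff_ne_empty]
      intro hemp
      apply hnecc
      have h1 := (Finset.union_eq_empty.1 hemp).1
      have h2' := (Finset.union_eq_empty.1 hemp).2
      have : C1.toFinset = C2.toFinset :=
        le_antisymm (Finset.sdiff_eq_empty_iff_subset.1 h1)
          (Finset.sdiff_eq_empty_iff_subset.1 h2')
      rwa [Set.toFinset_inj] at this
    obtain ⟨e, heD⟩ := hDne
    -- remove e from F
    have heF : e ∈ F := hDF e heD
    have hAe : Aᵀ e = ∑ g ∈ ((C1.toFinset \ C2.toFinset) ∪ (C2.toFinset \ C1.toFinset)).erase e,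
        Aᵀ g := by
      have hadd := Finset.add_sum_erase _ (fun g => Aᵀ g) heD
      rw [hDsum] at hadd
      calc Aᵀ e = Aᵀ e + (∑ g ∈ ((C1.toFinset \ C2.toFinset) ∪ (C2.toFinset \ C1.toFinset)).erase e,
              Aᵀ g + ∑ g ∈ ((C1.toFinset \ C2.toFinset) ∪ (C2.toFinset \ C1.toFinset)).erase e,
              Aᵀ g) := by rw [h2, add_zero]
        _ = (Aᵀ e + ∑ g ∈ ((C1.toFinset \ C2.toFinset) ∪ (C2.toFinset \ C1.toFinset)).erase e,
              Aᵀ g) + ∑ g ∈ ((C1.toFinset \ C2.toFinset) ∪ (C2.toFinset \ C1.toFinset)).erase e,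
              Aᵀ g := by rw [add_assoc]
        _ = ∑ g ∈ ((C1.toFinset \ C2.toFinset) ∪ (C2.toFinset \ C1.toFinset)).erase e, Aᵀ g := by
              rw [hadd, zero_add]
    have hspanle : Submodule.span (ZMod 2) ((fun f : E => Aᵀ f) '' F) ≤
        Submodule.span (ZMod 2) ((fun f : E => Aᵀ f) '' (F \ {e})) := by
      rw [Submodule.span_le]
      rintro v ⟨f, hfF, rfl⟩
      show Aᵀ f ∈ (Submodule.span (ZMod 2) ((fun f : E => Aᵀ f) '' (F \ {e})) : Set (V → ZMod 2))
      by_cases hfe : f = e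
      · rw [hfe, hAe]
        refine Submodule.sum_mem _ ?_
        intro g hg
        have hge : g ≠ e := Finset.ne_of_mem_erase hg
        have hgF : g ∈ F := hDF g (Finset.mem_of_mem_erase hg)
        exact Submodule.subset_span ⟨g, ⟨hgF, hge⟩, rfl⟩
      · exact Submodule.subset_span ⟨f, ⟨hfF, hfe⟩, rfl⟩
    have hlt : (F \ {e}).ncard < F.ncard :=
      Set.ncard_diff_singleton_lt_of_mem heF (Set.toFinite F)
    have hmem : (F \ {e}).ncard ∈ {n | ∃ F : Set E, (Disjoint F T ∧ F.ncard ≤ k ∧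
        ∀ e ∈ T, Aᵀ e ∈ Submodule.span (ZMod 2) ((fun f : E => Aᵀ f) '' F)) ∧ F.ncard = n} := by
      refine ⟨F \ {e}, ⟨?_, ?_, ?_⟩, rfl⟩
      · exact Disjoint.mono_left Set.diff_subset hF.1
      · exact le_trans hlt.le hF.2.1
      · intro e' he'
        exact hspanle (hF.2.2 e' he')
    have := Nat.sInf_le hmem
    omega
  -- counting: σ maps into the span of the columns of P
  set Q : Submodule (ZMod 2) (V → ZMod 2) :=
    Submodule.span (ZMod 2) ((Finset.univ.image fun e : E => Pᵀ e : Finset (V → ZMod 2)) : Set (V → ZMod 2)) with hQ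
  have hmemQ : ∀ C ∈ {C : Set E | IsCycle x y C ∧ C ⊆ F}, σ C ∈ (Q : Set (V → ZMod 2)) := by
    intro C _
    refine Submodule.sum_mem _ ?_
    intro e _
    refine Submodule.subset_span ?_
    simp
    exact ⟨e, rfl⟩
  have hcount : {C : Set E | IsCycle x y C ∧ C ⊆ F}.ncard ≤ (Q : Set (V → ZMod 2)).ncard :=
    Set.ncard_le_ncard_of_injOn σ hmemQ hinj (Set.toFinite _)
  refine hcount.trans ?_
  rw [← Nat.card_coe_set_eq]
  -- Nat.card Q ≤ 2 ^ t
  have hsurj : Function.Surjective (fun c : (↑(Finset.univ.image fun e : E => Pᵀ e) : Type _) → ZMod 2 =>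
      (⟨∑ i : (↑(Finset.univ.image fun e : E => Pᵀ e) : Type _), c i • (i : V → ZMod 2),
        Submodule.sum_mem _ fun i _ => Submodule.smul_mem _ _ (Submodule.subset_span i.2)⟩ : Q)) := by
    rintro ⟨q, hq⟩
    rw [hQ] at hq
    obtain ⟨f, -, hf⟩ := Submodule.mem_span_finset.1 hq
    refine ⟨fun i => f i, ?_⟩
    ext1
    simp only
    rw [← hf, ← Finset.sum_coe_sort (Finset.univ.image fun e : E => Pᵀ e) (fun i => f i • i)]
  have hle : Nat.card Q ≤ Nat.card ((↑(Finset.univ.image fun e : E => Pᵀ e) : Type _) → ZMod 2) :=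
    Nat.card_le_card_of_surjective _ hsurj
  refine le_trans (le_of_eq rfl) (le_trans hle ?_)
  rw [Nat.card_eq_fintype_card, Fintype.card_fun, Fintype.card_coe, ZMod.card, ht]
end

section
/- Consider an instance of Space Cover on the dual of a perturbed graphic matroid: a loopless finite multigraph G, a matrix P over GF(2) with rows indexed by V(G) and columns indexed by E(G), A = I(G) + P, a terminal set T ⊆ E(G), and a non-negative integer k. If there exist a parity restriction h and a set S ⊆ E(G)∖T that is a solution compatible with h, then there exists F ⊆ E(G)∖T with |F| ≤ k such that for every e ∈ T there is a subset F_e ⊆ F for which the characteristic vector of F_e ∪ {e} (a vector in GF(2)^{E(G)}) lies in the GF(2)-span of the set of rows of A. -/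
open Matrix

variable {V E : Type*}

/-- The set of distinct rows `R_1, …, R_t` of the matrix `P`. -/
def RowsOf (P : Matrix V E (ZMod 2)) : Set (E → ZMod 2) := Set.range fun v : V => P v

/-- For an assignment `B` of a bit to each distinct row of `P` (a vector in `GF(2)^t`),
`sumVec P B = ∑_{i=1}^t b_i • R_i ∈ GF(2)^{E}`. -/
noncomputable def sumVec (P : Matrix V E (ZMod 2)) (B : (E → ZMod 2) → ZMod 2) :
    E → ZMod 2 :=
  ∑ᶠ r ∈ RowsOf P, B r • r

/-- `X ⊆ V(G)` is compatible with `B` if `|X ∩ V_i| ≡ b_i (mod 2)` for every distinct row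
`R_i` of `P`, where `V_i = {v : P_v = R_i}`. -/
def CompatibleWith (P : Matrix V E (ZMod 2)) (X : Set V)
    (B : (E → ZMod 2) → ZMod 2) : Prop :=
  ∀ r ∈ RowsOf P, (({v ∈ X | P v = r}.ncard : ZMod 2)) = B r

/-- The edge `e` is expensive with respect to `(B, (X, X̄))`: writing `r̃` for the entry of
`sumVec P B` at `e`, either both endpoints lie in `X` and `r̃ = 1`, or both lie in `X̄` and
`r̃ = 1`, or exactly one endpoint lies in `X` and `r̃ = 0`. -/
def Expensive (x y : E → V) (P : Matrix V E (ZMod 2))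
    (B : (E → ZMod 2) → ZMod 2) (X : Set V) (e : E) : Prop :=
  (x e ∈ X ∧ y e ∈ X ∧ sumVec P B e = 1) ∨
  (x e ∉ X ∧ y e ∉ X ∧ sumVec P B e = 1) ∨
  (((x e ∈ X ∧ y e ∉ X) ∨ (x e ∉ X ∧ y e ∈ X)) ∧ sumVec P B e = 0)

/-- The partition `(X, X̄)` is good with respect to `(B, e)`: `X` is compatible with `B`,
`e` is expensive, and every edge of `T ∖ {e}` is cheap. -/
def GoodPartition (x y : E → V) (P : Matrix V E (ZMod 2)) (T : Set E)
    (B : (E → ZMod 2) → ZMod 2) (e : E) (X : Set V) : Prop :=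
  CompatibleWith P X B ∧ Expensive x y P B X e ∧
    ∀ e' ∈ T, e' ≠ e → ¬ Expensive x y P B X e'

/-- `S ⊆ E(G) ∖ T` is a solution compatible with the parity restriction `h`: `|S| ≤ k` and
for every terminal `e ∈ T` there is a partition `(X_e, X̄_e)` of `V(G)` that is good with
respect to `(h e, e)` such that every edge expensive with respect to `(h e, (X_e, X̄_e))`
other than `e` belongs to `S`. -/
def SolutionCompatible (x y : E → V) (P : Matrix V E (ZMod 2)) (T : Set E) (k : ℕ)
    (h : E → (E → ZMod 2) → ZMod 2) (S : Set E) : Prop :=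
  S.ncard ≤ k ∧ ∀ e ∈ T, ∃ X : Set V,
    GoodPartition x y P T (h e) e X ∧
    ∀ e' : E, Expensive x y P (h e) X e' → e' ≠ e → e' ∈ S

/-- Space Cover on the dual of a perturbed graphic matroid: if there exist
a parity restriction `h` and a set `S ⊆ E(G) ∖ T` that is a solution compatible with `h`,
then there exists `F ⊆ E(G) ∖ T` with `|F| ≤ k` such that for every `e ∈ T` there is
`F_e ⊆ F` whose characteristic vector together with `e` lies in the GF(2)-span of the rows
of `A = I(G) + P`. -/
theorem solutionCompatible_implies_spaceCoverDualPGM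
    [Fintype V] [Fintype E] [DecidableEq V]
    (x y : E → V) (hloop : ∀ e : E, x e ≠ y e)
    (P A : Matrix V E (ZMod 2)) (hA : A = incMatrix x y + P)
    (T : Set E) (k : ℕ)
    (hex : ∃ (h : E → (E → ZMod 2) → ZMod 2) (S : Set E),
      Disjoint S T ∧ SolutionCompatible x y P T k h S) :
    ∃ F : Set E, Disjoint F T ∧ F.ncard ≤ k ∧
      ∀ e ∈ T, ∃ Fe ⊆ F,
        charVec (insert e Fe) ∈
          Submodule.span (ZMod 2) (Set.range fun v : V => A v) := by
  classical
  obtain ⟨h, S, hdisj, hScard, hSsol⟩ := hex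
  refine ⟨S, hdisj, hScard, ?_⟩
  intro e he
  obtain ⟨X, ⟨hcomp, hexpe, _⟩, hin⟩ := hSsol e he
  set B := h e with hB
  set Fe : Set E := {e' | Expensive x y P B X e' ∧ e' ≠ e} with hFe
  refine ⟨Fe, fun e' he' => hin e' he'.1 he'.2, ?_⟩
  set Xf : Finset V := X.toFinset with hXf
  -- key computation: sum of the rows of P over X equals sumVec P B
  have hsumP : (∑ v ∈ Xf, P v) = sumVec P B := by
    have hR : RowsOf P = ↑(Finset.univ.image fun v : V => P v) := by
      rw [Finset.coe_image, Finset.coe_univ, Set.image_univ]; rfl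
    rw [sumVec, hR, finsum_mem_coe_finset]
    refine Eq.trans (Finset.sum_fiberwise_of_maps_to (s := Xf) (g := fun v : V => P v)
      (t := Finset.univ.image fun v : V => P v) (f := fun v : V => (P v : E → ZMod 2))
      (fun v _ => Finset.mem_image_of_mem _ (Finset.mem_univ v))).symm ?_
    refine Finset.sum_congr rfl fun r hr => ?_
    have hr' : r ∈ RowsOf P := by
      rw [hR]; exact_mod_cast hr
    have h1 : ∑ v ∈ Xf.filter (fun v => P v = r), (P v : E → ZMod 2)
        = (Xf.filter (fun v => P v = r)).card • r := by
      exact (Finset.sum_congr (g := fun _ => r) rfl fun v hv => (Finset.mem_filter.mp hv).2).trans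
        (Finset.sum_const r)
    refine Eq.trans (?_ : _ = (Xf.filter (fun v => P v = r)).card • r) ?_
    · convert h1 using 2
      ext v; simp [Finset.mem_filter]
    rw [← Nat.cast_smul_eq_nsmul (ZMod 2)]
    congr 1
    rw [← hcomp r hr']
    congr 1
    have : {v ∈ X | P v = r} = ↑(Xf.filter (fun v => P v = r)) := by
      ext v; simp [hXf]
    rw [this, Set.ncard_coe_finset]
  -- the vector ∑_{v ∈ X} A v
  have hmem : (∑ v ∈ Xf, A v) ∈
      Submodule.span (ZMod 2) (Set.range fun v : V => A v) :=
    Submodule.sum_mem _ fun v _ => Submodule.subset_span ⟨v, rfl⟩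
  have hchar : charVec (insert e Fe) = ∑ v ∈ Xf, A v := by
    funext e'
    have hAval : (∑ v ∈ Xf, A v) e'
        = ((if x e' ∈ X then 1 else 0) + (if y e' ∈ X then 1 else 0))
          + sumVec P B e' := by
      have hXmem : ∀ w : V, (w ∈ Xf) = (w ∈ X) := by
        intro w; simp [hXf]
      rw [← hsumP]
      have : (∑ v ∈ Xf, A v) e' = ∑ v ∈ Xf, A v e' := by
        exact Finset.sum_apply e' Xf (fun v => A v)
      rw [this]
      have hsplit : ∀ v : V, A v e'
          = ((if v = x e' then (1 : ZMod 2) else 0)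
            + (if v = y e' then 1 else 0)) + P v e' := by
        intro v
        rw [hA]
        simp only [Matrix.add_apply, incMatrix]
        congr 1
        rcases eq_or_ne v (x e') with h1 | h1 <;> rcases eq_or_ne v (y e') with h2 | h2
        · exact absurd (h1.symm.trans h2) (hloop e')
        all_goals simp [h1, h2, hloop e', (hloop e').symm]
      rw [Finset.sum_congr rfl fun v _ => hsplit v]
      rw [Finset.sum_add_distrib, Finset.sum_add_distrib]
      rw [Finset.sum_ite_eq' Xf (x e') (fun _ => (1 : ZMod 2)),
        Finset.sum_ite_eq' Xf (y e') (fun _ => (1 : ZMod 2))]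
      simp [hXmem, Finset.sum_apply]
      exact (Finset.sum_apply e' Xf (fun v => P v)).symm
    have hins : e' ∈ insert e Fe ↔ Expensive x y P B X e' := by
      constructor
      · rintro (rfl | ⟨h1, _⟩)
        · exact hexpe
        · exact h1
      · intro hx
        by_cases hee : e' = e
        · exact hee ▸ Set.mem_insert _ _
        · exact Set.mem_insert_of_mem _ ⟨hx, hee⟩
    have hcv : charVec (insert e Fe) e'
        = if Expensive x y P B X e' then 1 else 0 := by
      rw [charVec, Set.indicator_apply]
      by_cases hi : e' ∈ insert e Fe
      · rw [if_pos hi, if_pos (hins.mp hi)]; rfl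
      · rw [if_neg hi, if_neg (fun hx => hi (hins.mpr hx))]
    rw [hcv, hAval]
    have h01 : sumVec P B e' = 0 ∨ sumVec P B e' = 1 := by
      have : ∀ a : ZMod 2, a = 0 ∨ a = 1 := by decide
      exact this _
    by_cases hx : x e' ∈ X <;> by_cases hy : y e' ∈ X <;>
      rcases h01 with hv | hv <;>
      simp [Expensive, hx, hy, hv] <;> decide
  rw [hchar]
  exact hmem
end

section
/- Consider an instance of Space Cover on the dual of a perturbed graphic matroid: a loopless finite multigraph G, a matrix P over GF(2) with rows indexed by V(G) and columns indexed by E(G), A = I(G) + P, a terminal set T ⊆ E(G), and a non-negative integer k. If there exists F ⊆ E(G)∖T with |F| ≤ k such that for every e ∈ T there is a subset F_e ⊆ F for which the characteristic vector of F_e ∪ {e} (a vector in GF(2)^{E(G)}) lies in the GF(2)-span of the set of rows of A, then there exist a parity restriction h and a set S ⊆ E(G)∖T that is a solution compatible with h. -/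
open Matrix

variable {V E : Type*}

/-- Space Cover on the dual of a perturbed graphic matroid: if there exists
`F ⊆ E(G) ∖ T` with `|F| ≤ k` such that for every `e ∈ T` there is `F_e ⊆ F` whose
characteristic vector together with `e` lies in the GF(2)-span of the rows of
`A = I(G) + P`, then there exist a parity restriction `h` and a set `S ⊆ E(G) ∖ T` that is
a solution compatible with `h`. -/
theorem spaceCoverDualPGM_implies_solutionCompatible
    [Fintype V] [Fintype E] [DecidableEq V]
    (x y : E → V) (hloop : ∀ e : E, x e ≠ y e)
    (P A : Matrix V E (ZMod 2)) (hA : A = incMatrix x y + P)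
    (T : Set E) (k : ℕ)
    (hex : ∃ F : Set E, Disjoint F T ∧ F.ncard ≤ k ∧
      ∀ e ∈ T, ∃ Fe ⊆ F,
        charVec (insert e Fe) ∈
          Submodule.span (ZMod 2) (Set.range fun v : V => A v)) :
    ∃ (h : E → (E → ZMod 2) → ZMod 2) (S : Set E),
      Disjoint S T ∧ SolutionCompatible x y P T k h S := by
  classical
  obtain ⟨F, hFT, hFk, hF⟩ := hex
  have h2 : ∀ a : ZMod 2, a = 0 ∨ a = 1 := by decide
  have key : ∀ e ∈ T, ∃ (B : (E → ZMod 2) → ZMod 2) (X : Set V),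
      GoodPartition x y P T B e X ∧
      ∀ e', Expensive x y P B X e' → e' ≠ e → e' ∈ F := by
    intro e he
    obtain ⟨Fe, hFeF, hspan⟩ := hF e he
    rw [Submodule.mem_span_range_iff_exists_fun] at hspan
    obtain ⟨c, hc⟩ := hspan
    set Xf : Finset V := Finset.univ.filter (fun v => c v = 1) with hXf
    set B : (E → ZMod 2) → ZMod 2 :=
      fun r => ((Xf.filter (fun v => P v = r)).card : ZMod 2) with hB
    have hsum : sumVec P B = ∑ v ∈ Xf, P v := by
      have hrows : RowsOf P = ↑(Finset.univ.image (fun v : V => P v)) := by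
        simp [RowsOf]
      rw [sumVec, hrows, finsum_mem_coe_finset]
      have h1 : ∀ r ∈ Finset.univ.image (fun v : V => P v),
          B r • r = ∑ v ∈ Xf.filter (fun v => P v = r), P v := by
        intro r _
        rw [hB, Nat.cast_smul_eq_nsmul, ← Finset.sum_const]
        exact Finset.sum_congr rfl fun v hv => ((Finset.mem_filter.mp hv).2).symm
      rw [Finset.sum_congr rfl h1]
      convert Finset.sum_fiberwise_of_maps_to (g := fun v : V => P v)
        (fun v _ => Finset.mem_image_of_mem _ (Finset.mem_univ v)) (fun v => P v) using 4
    have hcsum : ∀ M : Matrix V E (ZMod 2), (∑ v, c v • M v) = ∑ v ∈ Xf, M v := by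
      intro M
      rw [hXf]; erw [Finset.sum_filter]
      refine Finset.sum_congr rfl fun v _ => ?_
      rcases h2 (c v) with h | h <;> simp [h]
    have hchar : charVec (insert e Fe) = (∑ v ∈ Xf, incMatrix x y v) + sumVec P B := by
      rw [hsum, ← hc, hcsum]
      have : ∀ v : V, A v = incMatrix x y v + P v := by
        intro v; funext e'; rw [hA]; rfl
      rw [Finset.sum_congr rfl fun v _ => this v]; erw [Finset.sum_add_distrib]
    have hpt : ∀ e' : E, charVec (insert e Fe) e' =
        (if x e' ∈ Xf then (1 : ZMod 2) else 0) + (if y e' ∈ Xf then 1 else 0)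
          + sumVec P B e' := by
      intro e'
      have h3 := congrFun hchar e'
      rw [h3, Pi.add_apply]; erw [Finset.sum_apply]
      congr 1
      have hsplit : ∀ v : V, incMatrix x y v e' =
          (if v = x e' then (1 : ZMod 2) else 0) + (if v = y e' then 1 else 0) := by
        intro v
        by_cases hx1 : v = x e'
        · by_cases hy1 : v = y e'
          · exact absurd (hx1.symm.trans hy1) (hloop e')
          · simp [incMatrix, hx1, hy1, hloop e', (hloop e').symm]
        · by_cases hy1 : v = y e' <;>
            simp [incMatrix, hx1, hy1, hloop e', (hloop e').symm]
      rw [Finset.sum_congr rfl fun v _ => hsplit v, Finset.sum_add_distrib,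
        Finset.sum_ite_eq' Xf (x e') (fun _ => (1 : ZMod 2)),
        Finset.sum_ite_eq' Xf (y e') (fun _ => (1 : ZMod 2))]
    have hexp : ∀ e' : E, Expensive x y P B (↑Xf) e' ↔ charVec (insert e Fe) e' = 1 := by
      intro e'
      rw [hpt e']
      rcases h2 (sumVec P B e') with hs | hs <;>
        by_cases hx : x e' ∈ Xf <;> by_cases hy : y e' ∈ Xf <;>
          simp [Expensive, hs, hx, hy] <;> decide
    have hmem : ∀ e' : E, charVec (insert e Fe) e' = 1 ↔ e' ∈ insert e Fe := by
      intro e'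
      by_cases h : e' ∈ insert e Fe <;> simp [charVec, Set.indicator_apply, h]
    refine ⟨B, ↑Xf, ⟨?_, ?_, ?_⟩, ?_⟩
    · intro r hr
      have hset : {v ∈ (↑Xf : Set V) | P v = r} = ↑(Xf.filter fun v => P v = r) := by
        ext v; simp
      rw [hset, Set.ncard_coe_finset, hB]
    · rw [hexp, hmem]; exact Set.mem_insert _ _
    · intro e' he' hne
      rw [hexp, hmem]
      rintro (h | h)
      · exact hne h
      · exact Set.disjoint_left.mp hFT (hFeF h) he'
    · intro e' hE hne
      rw [hexp, hmem] at hE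
      rcases hE with h | h
      · exact absurd h hne
      · exact hFeF h
  choose! B X hgood hsub using key
  exact ⟨B, F, hFT, hFk, fun e he => ⟨X e, hgood e he, fun e' hE hne => hsub e he e' hE hne⟩⟩
end

section
/- In the setting of an Edge-Set Cover instance with a fixed terminal e ∈ T and the auxiliary multigraph G' constructed from it, let (Y,Ȳ) be an e-preliminary partition of V(G). Define U_Y (respectively Ū_Y) to be the set of new vertices of G' (vertices in V(G')∖V(G)) both of whose neighbours in G' lie in Ȳ (respectively, both of whose neighbours lie in Y). Set A_Y = Y ∪ U_Y and B_Y = V(G')∖A_Y, and let S_Y be the set of edges of G' having both endpoints in A_Y or both endpoints in B_Y. Then |S_Y| ≤ k and the graph G'∖S_Y is bipartite. -/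
variable {V E : Type*}

/-- The edge `e'` contributes to `(e₀, (X, X̄))` with respect to `f = f_{e₀}`: both
endpoints of `e'` lie in `X` and `f(e') = 1`, or both lie in `X̄` and `f(e') = 1`, or
exactly one endpoint lies in `X` and `f(e') = 0`. -/
def Contrib (x y : E → V) (f : E → ZMod 2) (X : Set V) (e' : E) : Prop :=
  (x e' ∈ X ∧ y e' ∈ X ∧ f e' = 1) ∨
  (x e' ∉ X ∧ y e' ∉ X ∧ f e' = 1) ∨
  (((x e' ∈ X ∧ y e' ∉ X) ∨ (x e' ∉ X ∧ y e' ∈ X)) ∧ f e' = 0)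

/-- `(Y, Ȳ)` is an `e₀`-preliminary partition: it almost fits `e₀`
(`T ∩ cont(e₀, Y) = {e₀}`) and `|cont(e₀, Y) ∖ {e₀}| ≤ k`. -/
def Preliminary (x y : E → V) (f : E → ZMod 2) (T : Set E) (k : ℕ) (e₀ : E)
    (Y : Set V) : Prop :=
  Contrib x y f Y e₀ ∧ (∀ e' ∈ T, e' ≠ e₀ → ¬ Contrib x y f Y e') ∧
  {e' : E | Contrib x y f Y e' ∧ e' ≠ e₀}.ncard ≤ k

/-- The edge `e'` gets a new vertex in the auxiliary graph `G'`: either `e'` is a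
non-terminal edge with `f(e') = 0` (which is subdivided), or `e' = e₀` and `f(e₀) = 1`,
or `e'` is another terminal with `f(e') = 0`. -/
def NeedsNew (T : Set E) (f : E → ZMod 2) (e₀ : E) (e' : E) : Prop :=
  (e' ∉ T ∧ f e' = 0) ∨ (e' = e₀ ∧ f e₀ = 1) ∨ (e' ∈ T ∧ e' ≠ e₀ ∧ f e' = 0)

/-- Valid indices for the edges of the auxiliary graph `G'`. An edge of `G'` is indexed by
a triple `(e', i, b)` where `e' ∈ E(G)`, `i ∈ Fin (k+1)` and `b : Bool`:
* a non-terminal edge `e'` with `f(e') = 1` is kept: index `(e', 0, false)`;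
* a non-terminal edge `e'` with `f(e') = 0` is subdivided into the two edges
  `(e', 0, false)` (at `x e'`) and `(e', 0, true)` (at `y e'`);
* if `f(e₀) = 0`, `k+1` parallel edges `(e₀, i, false)` join the endpoints of `e₀`;
* if `f(e₀) = 1`, a new vertex is joined to `x e₀` by the `k+1` edges `(e₀, i, false)`
  and to `y e₀` by the `k+1` edges `(e₀, i, true)`;
* for a terminal `e' ≠ e₀` with `f(e') = 1`, `k+1` parallel edges `(e', i, false)` join
  its endpoints; for `f(e') = 0`, a new vertex is joined to each endpoint by `k+1`
  parallel edges as above. -/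
def ValidIdx (T : Set E) (f : E → ZMod 2) (e₀ : E) (k : ℕ)
    (p : E × Fin (k + 1) × Bool) : Prop :=
  (p.1 ∉ T ∧ f p.1 = 1 ∧ p.2.1 = 0 ∧ p.2.2 = false) ∨
  (p.1 ∉ T ∧ f p.1 = 0 ∧ p.2.1 = 0) ∨
  (p.1 = e₀ ∧ f e₀ = 0 ∧ p.2.2 = false) ∨
  (p.1 = e₀ ∧ f e₀ = 1) ∨
  (p.1 ∈ T ∧ p.1 ≠ e₀ ∧ f p.1 = 1 ∧ p.2.2 = false) ∨
  (p.1 ∈ T ∧ p.1 ≠ e₀ ∧ f p.1 = 0)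

/-- The edge set of the auxiliary graph `G'`. -/
def GEdge (T : Set E) (f : E → ZMod 2) (e₀ : E) (k : ℕ) : Type _ :=
  {p : E × Fin (k + 1) × Bool // ValidIdx T f e₀ k p}

/-- First endpoint, in `V(G') = V ⊕ E` (`Sum.inl v` is an original vertex, `Sum.inr e'`
is the new vertex created for `e'`), of an edge of `G'`: the edge `(e', i, false)` is
attached at `x e'` and the edge `(e', i, true)` at `y e'`. -/
def xG' (x y : E → V) (T : Set E) (f : E → ZMod 2) (e₀ : E) (k : ℕ)
    (p : GEdge T f e₀ k) : V ⊕ E :=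
  if p.1.2.2 then Sum.inl (y p.1.1) else Sum.inl (x p.1.1)

open Classical in
/-- Second endpoint of an edge of `G'`: the new vertex `Sum.inr e'` when `e'` gets a new
vertex (subdivision vertex or `v_{e'}`), and the other original endpoint otherwise. -/
noncomputable def yG' (x y : E → V) (T : Set E) (f : E → ZMod 2) (e₀ : E) (k : ℕ)
    (p : GEdge T f e₀ k) : V ⊕ E :=
  if NeedsNew T f e₀ p.1.1 then Sum.inr p.1.1 else Sum.inl (y p.1.1)

/-- Adjacency in the auxiliary graph `G'`. -/
def AdjG' (x y : E → V) (T : Set E) (f : E → ZMod 2) (e₀ : E) (k : ℕ)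
    (w z : V ⊕ E) : Prop :=
  ∃ p : GEdge T f e₀ k,
    (xG' x y T f e₀ k p = w ∧ yG' x y T f e₀ k p = z) ∨
    (xG' x y T f e₀ k p = z ∧ yG' x y T f e₀ k p = w)

/-- Let `(Y, Ȳ)` be an `e₀`-preliminary partition of `V(G)`. Let `U_Y`
be the set of new vertices of `G'` all of whose neighbours lie in `Ȳ`, let
`A_Y = Y ∪ U_Y` (inside `V(G')`), `B_Y = V(G') ∖ A_Y`, and let `S_Y` be the set of edges
of `G'` with both endpoints in `A_Y` or both in `B_Y`. Then `|S_Y| ≤ k` and `G' ∖ S_Y`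
is bipartite. -/
theorem preliminary_partition_gives_small_bipartization
    [Fintype V] [Fintype E]
    (x y : E → V) (hloop : ∀ e : E, x e ≠ y e)
    (T : Set E) (f : E → ZMod 2) (k : ℕ) (e₀ : E) (he₀ : e₀ ∈ T)
    (Y : Set V) (hY : Preliminary x y f T k e₀ Y)
    (UY AY : Set (V ⊕ E))
    (hUY : UY = {w : V ⊕ E | (∃ e' : E, w = Sum.inr e') ∧
      ∀ z : V ⊕ E, AdjG' x y T f e₀ k w z → z ∈ Sum.inl '' Yᶜ})
    (hAY : AY = (Sum.inl '' Y) ∪ UY)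
    (SY : Set (GEdge T f e₀ k))
    (hSY : SY = {p : GEdge T f e₀ k |
      (xG' x y T f e₀ k p ∈ AY ↔ yG' x y T f e₀ k p ∈ AY)}) :
    SY.ncard ≤ k ∧
    ∃ Part : Set (V ⊕ E), ∀ p : GEdge T f e₀ k, p ∉ SY →
      Xor' (xG' x y T f e₀ k p ∈ Part) (yG' x y T f e₀ k p ∈ Part) := by
  classical
  obtain ⟨hC0, hNC, hcard⟩ := hY
  have hinl : ∀ v : V, (Sum.inl v : V ⊕ E) ∈ AY ↔ v ∈ Y := by
    intro v
    rw [hAY]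
    constructor
    · rintro (⟨w, hw, hww⟩ | h)
      · cases hww; exact hw
      · rw [hUY] at h
        obtain ⟨⟨e', he'⟩, -⟩ := h
        exact absurd he' (by simp)
    · intro hv
      exact Or.inl ⟨v, hv, rfl⟩
  have hvalid : ∀ e', NeedsNew T f e₀ e' → ∀ b : Bool,
      ValidIdx T f e₀ k (e', 0, b) := by
    intro e' hNN b
    rcases hNN with ⟨hT, hf⟩ | ⟨heq, hf⟩ | ⟨hT, hne, hf⟩
    · exact Or.inr (Or.inl ⟨hT, hf, rfl⟩)
    · exact Or.inr (Or.inr (Or.inr (Or.inl ⟨heq, hf⟩)))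
    · exact Or.inr (Or.inr (Or.inr (Or.inr (Or.inr ⟨hT, hne, hf⟩))))
  have hyGpos : ∀ (p : GEdge T f e₀ k), NeedsNew T f e₀ p.1.1 →
      yG' x y T f e₀ k p = Sum.inr p.1.1 := by
    intro p h; rw [yG']; exact if_pos h
  have hyGneg : ∀ (p : GEdge T f e₀ k), ¬ NeedsNew T f e₀ p.1.1 →
      yG' x y T f e₀ k p = Sum.inl (y p.1.1) := by
    intro p h; rw [yG']; exact if_neg h
  have hxGf : ∀ (e' : E) (i : Fin (k+1)) (hv : ValidIdx T f e₀ k (e', i, false)),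
      xG' x y T f e₀ k ⟨(e', i, false), hv⟩ = Sum.inl (x e') := fun _ _ _ => rfl
  have hxGt : ∀ (e' : E) (i : Fin (k+1)) (hv : ValidIdx T f e₀ k (e', i, true)),
      xG' x y T f e₀ k ⟨(e', i, true), hv⟩ = Sum.inl (y e') := fun _ _ _ => rfl
  have hyGr : ∀ (e' : E) (i : Fin (k+1)) (b : Bool)
      (hv : ValidIdx T f e₀ k (e', i, b)), NeedsNew T f e₀ e' →
      yG' x y T f e₀ k ⟨(e', i, b), hv⟩ = Sum.inr e' := by
    intro e' i b hv h
    show (if NeedsNew T f e₀ e' then (Sum.inr e' : V ⊕ E)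
      else Sum.inl (y e')) = Sum.inr e'
    exact if_pos h
  have hyGl : ∀ (e' : E) (i : Fin (k+1)) (b : Bool)
      (hv : ValidIdx T f e₀ k (e', i, b)), ¬ NeedsNew T f e₀ e' →
      yG' x y T f e₀ k ⟨(e', i, b), hv⟩ = Sum.inl (y e') := by
    intro e' i b hv h
    show (if NeedsNew T f e₀ e' then (Sum.inr e' : V ⊕ E)
      else Sum.inl (y e')) = Sum.inl (y e')
    exact if_neg h
  have hinr : ∀ e' : E, NeedsNew T f e₀ e' →
      ((Sum.inr e' : V ⊕ E) ∈ AY ↔ (x e' ∉ Y ∧ y e' ∉ Y)) := by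
    intro e' hNN
    have hAdj : ∀ z, AdjG' x y T f e₀ k (Sum.inr e') z →
        (z = Sum.inl (x e') ∨ z = Sum.inl (y e')) := by
      rintro z ⟨p, ⟨hx1, hy1⟩ | ⟨hx1, hy1⟩⟩
      · exfalso; revert hx1; rw [xG']; split <;> simp
      · have hNNp : NeedsNew T f e₀ p.1.1 := by
          by_contra h
          rw [hyGneg p h] at hy1
          exact absurd hy1 (by simp)
        have h2 : p.1.1 = e' := by
          rw [hyGpos p hNNp] at hy1
          exact Sum.inr.inj hy1
        rw [← hx1, xG', h2]
        split
        · exact Or.inr rfl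
        · exact Or.inl rfl
    have hadjx : AdjG' x y T f e₀ k (Sum.inr e') (Sum.inl (x e')) :=
      ⟨⟨(e', 0, false), hvalid e' hNN false⟩,
        Or.inr ⟨hxGf e' 0 _, hyGr e' 0 false _ hNN⟩⟩
    have hadjy : AdjG' x y T f e₀ k (Sum.inr e') (Sum.inl (y e')) :=
      ⟨⟨(e', 0, true), hvalid e' hNN true⟩,
        Or.inr ⟨hxGt e' 0 _, hyGr e' 0 true _ hNN⟩⟩
    constructor
    · intro h
      rw [hAY] at h
      rcases h with ⟨w, -, hww⟩ | h
      · exact absurd hww (by simp)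
      · rw [hUY] at h
        obtain ⟨-, hall⟩ := h
        constructor
        · obtain ⟨v, hv, hveq⟩ := hall _ hadjx
          cases hveq; exact hv
        · obtain ⟨v, hv, hveq⟩ := hall _ hadjy
          cases hveq; exact hv
    · rintro ⟨hx, hy⟩
      rw [hAY]
      refine Or.inr ?_
      rw [hUY]
      refine ⟨⟨e', rfl⟩, fun z hz => ?_⟩
      rcases hAdj z hz with rfl | rfl
      · exact ⟨x e', hx, rfl⟩
      · exact ⟨y e', hy, rfl⟩
  have h01 : (0 : ZMod 2) ≠ 1 := by decide
  have hNN1 : ∀ e', e' ∉ T → f e' = 1 → ¬ NeedsNew T f e₀ e' := by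
    rintro e' hT hf (⟨-, h0⟩ | ⟨rfl, -⟩ | ⟨hT', -⟩)
    · rw [hf] at h0; exact h01 h0.symm
    · exact hT he₀
    · exact hT hT'
  have hNN3 : ∀ e', e' = e₀ → f e₀ = 0 → ¬ NeedsNew T f e₀ e' := by
    rintro e' rfl hf (⟨hT, -⟩ | ⟨-, h1⟩ | ⟨-, hne, -⟩)
    · exact hT he₀
    · rw [hf] at h1; exact h01 h1
    · exact hne rfl
  have hNN5 : ∀ e', e' ∈ T → e' ≠ e₀ → f e' = 1 → ¬ NeedsNew T f e₀ e' := by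
    rintro e' hT hne hf (⟨hT', -⟩ | ⟨rfl, -⟩ | ⟨-, -, h0⟩)
    · exact hT' hT
    · exact hne rfl
    · rw [hf] at h0; exact h01 h0.symm
  -- the membership condition in `SY`, stated concretely
  have hmem : ∀ (e' : E) (i : Fin (k+1)) (b : Bool)
      (hv : ValidIdx T f e₀ k (e', i, b)),
      (⟨(e', i, b), hv⟩ : GEdge T f e₀ k) ∈ SY ↔
      (xG' x y T f e₀ k ⟨(e', i, b), hv⟩ ∈ AY ↔
        yG' x y T f e₀ k ⟨(e', i, b), hv⟩ ∈ AY) := by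
    intro e' i b hv
    rw [hSY]
    rfl
  have key : ∀ p ∈ SY, p.1.1 ∉ T ∧ Contrib x y f Y p.1.1 := by
    rintro ⟨⟨e', i, b⟩, hv⟩ hp
    replace hp := (hmem e' i b hv).mp hp
    have hvc := hv
    rcases hvc with ⟨hT, hf, hi, hb⟩ | ⟨hT, hf, hi⟩ | ⟨heq, hf, hb⟩ |
      ⟨heq, hf⟩ | ⟨hT, hne, hf, hb⟩ | ⟨hT, hne, hf⟩
    · -- nonterminal, f = 1
      simp only at hb
      subst hb
      rw [hyGl _ _ _ _ (hNN1 e' hT hf), hxGf, hinl, hinl] at hp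
      refine ⟨hT, ?_⟩
      by_cases hxY : x e' ∈ Y
      · exact Or.inl ⟨hxY, hp.mp hxY, hf⟩
      · exact Or.inr (Or.inl ⟨hxY, fun h => hxY (hp.mpr h), hf⟩)
    · -- nonterminal, f = 0
      have hNN : NeedsNew T f e₀ e' := Or.inl ⟨hT, hf⟩
      rw [hyGr _ _ _ _ hNN, hinr e' hNN] at hp
      refine ⟨hT, Or.inr (Or.inr ⟨?_, hf⟩)⟩
      cases b
      · rw [hxGf, hinl] at hp; tauto
      · rw [hxGt, hinl] at hp; tauto
    · -- e₀, f e₀ = 0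
      exfalso
      simp only at heq hb
      subst hb
      rw [hyGl _ _ _ _ (hNN3 e' heq hf), hxGf, hinl, hinl] at hp
      have hC0' : Contrib x y f Y e' := by rw [heq]; exact hC0
      have hf' : f e' = 0 := by rw [heq]; exact hf
      rcases hC0' with ⟨-, -, h1⟩ | ⟨-, -, h1⟩ | ⟨hone, -⟩
      · rw [hf'] at h1; exact h01 h1
      · rw [hf'] at h1; exact h01 h1
      · tauto
    · -- e₀, f e₀ = 1
      exfalso
      simp only at heq
      have hNN : NeedsNew T f e₀ e' := Or.inr (Or.inl ⟨heq, hf⟩)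
      rw [hyGr _ _ _ _ hNN, hinr e' hNN] at hp
      have hC0' : Contrib x y f Y e' := by rw [heq]; exact hC0
      have hf' : f e' = 1 := by rw [heq]; exact hf
      rcases hC0' with ⟨hx1, hy1, -⟩ | ⟨hx1, hy1, -⟩ | ⟨-, h0⟩
      · cases b
        · rw [hxGf, hinl] at hp; tauto
        · rw [hxGt, hinl] at hp; tauto
      · cases b
        · rw [hxGf, hinl] at hp; tauto
        · rw [hxGt, hinl] at hp; tauto
      · rw [hf'] at h0; exact h01 h0.symm
    · -- other terminal, f = 1
      exfalso
      simp only at hb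
      subst hb
      rw [hyGl _ _ _ _ (hNN5 e' hT hne hf), hxGf, hinl, hinl] at hp
      refine hNC e' hT hne ?_
      by_cases hxY : x e' ∈ Y
      · exact Or.inl ⟨hxY, hp.mp hxY, hf⟩
      · exact Or.inr (Or.inl ⟨hxY, fun h => hxY (hp.mpr h), hf⟩)
    · -- other terminal, f = 0
      exfalso
      have hNN : NeedsNew T f e₀ e' := Or.inr (Or.inr ⟨hT, hne, hf⟩)
      rw [hyGr _ _ _ _ hNN, hinr e' hNN] at hp
      have hnc := hNC e' hT hne
      have hone : ¬ ((x e' ∈ Y ∧ y e' ∉ Y) ∨ (x e' ∉ Y ∧ y e' ∈ Y)) :=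
        fun h => hnc (Or.inr (Or.inr ⟨h, hf⟩))
      cases b
      · rw [hxGf, hinl] at hp; tauto
      · rw [hxGt, hinl] at hp; tauto
  have hmemb : ∀ (e' : E) (i : Fin (k+1)) (b : Bool)
      (hv : ValidIdx T f e₀ k (e', i, b)),
      e' ∉ T → f e' = 0 → (⟨(e', i, b), hv⟩ : GEdge T f e₀ k) ∈ SY →
      ((cond b (y e') (x e')) ∈ Y ↔ (x e' ∉ Y ∧ y e' ∉ Y)) := by
    intro e' i b hv hT hf hp
    have hNN : NeedsNew T f e₀ e' := Or.inl ⟨hT, hf⟩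
    rw [hmem] at hp
    rw [hyGr _ _ _ _ hNN, hinr e' hNN] at hp
    cases b
    · rw [hxGf, hinl] at hp; exact hp
    · rw [hxGt, hinl] at hp; exact hp
  have hinj : Set.InjOn (fun p : GEdge T f e₀ k => p.1.1) SY := by
    rintro ⟨⟨ep, ip, bp⟩, hvp⟩ hp ⟨⟨eq', iq, bq⟩, hvq⟩ hq hpq
    have heq : ep = eq' := hpq
    subst heq
    obtain ⟨hTp, -⟩ := key _ hp
    obtain ⟨hTq, -⟩ := key _ hq
    simp only at hTp hTq
    have hI : ip = iq ∧ bp = bq := by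
      have hvp' := hvp
      have hvq' := hvq
      rcases hvp' with ⟨-, hf, hi, hb⟩ | ⟨-, hf, hi⟩ | ⟨heq, -⟩ |
        ⟨heq, -⟩ | ⟨hT', -⟩ | ⟨hT', -⟩
      · rcases hvq' with ⟨-, -, hi', hb'⟩ | ⟨-, hf', -⟩ | ⟨heq', -⟩ |
          ⟨heq', -⟩ | ⟨hT', -⟩ | ⟨hT', -, hf'⟩
        · exact ⟨hi.trans hi'.symm, hb.trans hb'.symm⟩
        · rw [hf] at hf'; exact absurd hf'.symm h01
        · have hE : ep = e₀ := heq'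
          exact absurd he₀ (hE ▸ hTq)
        · have hE : ep = e₀ := heq'
          exact absurd he₀ (hE ▸ hTq)
        · exact absurd hT' hTq
        · exact absurd hT' hTq
      · rcases hvq' with ⟨-, hf', -⟩ | ⟨-, -, hi'⟩ | ⟨heq', -⟩ |
          ⟨heq', -⟩ | ⟨hT', -⟩ | ⟨hT', -⟩
        · rw [hf] at hf'; exact absurd hf' h01
        · refine ⟨hi.trans hi'.symm, ?_⟩
          have h1 := hmemb _ ip bp hvp hTp hf hp
          have h2 := hmemb _ iq bq hvq hTq hf hq
          cases bp <;> cases bq <;>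
            simp only [cond_false, cond_true] at h1 h2
          · rfl
          · exfalso; tauto
          · exfalso; tauto
          · rfl
        · have hE : ep = e₀ := heq'
          exact absurd he₀ (hE ▸ hTq)
        · have hE : ep = e₀ := heq'
          exact absurd he₀ (hE ▸ hTq)
        · exact absurd hT' hTq
        · exact absurd hT' hTq
      · have hE : ep = e₀ := heq
        exact absurd he₀ (hE ▸ hTp)
      · have hE : ep = e₀ := heq
        exact absurd he₀ (hE ▸ hTp)
      · exact absurd hT' hTp
      · exact absurd hT' hTp
    obtain ⟨h1, h2⟩ := hI
    subst h1; subst h2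
    rfl
  constructor
  · have hsub : ∀ p ∈ SY, (fun p : GEdge T f e₀ k => p.1.1) p ∈
        {e' : E | Contrib x y f Y e' ∧ e' ≠ e₀} := by
      intro p hp
      obtain ⟨hT', hC⟩ := key p hp
      refine ⟨hC, fun h => hT' ?_⟩
      have h' : p.1.1 = e₀ := h
      rw [h']; exact he₀
    calc SY.ncard ≤ ({e' : E | Contrib x y f Y e' ∧ e' ≠ e₀}).ncard :=
          Set.ncard_le_ncard_of_injOn _ hsub hinj (Set.toFinite _)
      _ ≤ k := hcard
  · refine ⟨AY, fun p hp => ?_⟩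
    rw [hSY, Set.mem_setOf_eq] at hp
    rw [Xor']
    tauto
end

section
/- In the setting of an Edge-Set Cover instance with a fixed terminal e ∈ T and the auxiliary multigraph G' constructed from it, let S ⊆ E(G') with |S| ≤ k be such that G'∖S is bipartite, and let (A_S, B_S) be any partition of V(G') such that every edge of G'∖S has one endpoint in A_S and one endpoint in B_S. Then (A_S ∩ V(G), B_S ∩ V(G)) is an e-preliminary partition of V(G). -/
variable {V E : Type*}

private lemma zmod2_cases' (a : ZMod 2) : a = 0 ∨ a = 1 := by revert a; decide

private lemma exists_group_not_mem' {α : Type*} [Finite α] {k : ℕ} {S : Set α}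
    (hS : S.ncard ≤ k) (g : Fin (k + 1) → α) (hg : Function.Injective g) :
    ∃ i, g i ∉ S := by
  by_contra h
  push_neg at h
  have h1 : Set.range g ⊆ S := Set.range_subset_iff.2 h
  have h2 := Set.ncard_le_ncard h1 S.toFinite
  have h3 : (Set.range g).ncard = k + 1 := by
    rw [← Set.image_univ, Set.ncard_image_of_injective _ hg, Set.ncard_univ,
      Nat.card_eq_fintype_card, Fintype.card_fin]
  omega

/-- Let `S ⊆ E(G')` with `|S| ≤ k` be such that `G' ∖ S` is bipartite,
witnessed by a partition `(A_S, B_S)` of `V(G')` (with `B_S = A_Sᶜ`) such that every edge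
of `G' ∖ S` has one endpoint in `A_S` and one in `B_S`. Then
`(A_S ∩ V(G), B_S ∩ V(G))` is an `e₀`-preliminary partition of `V(G)`. -/
theorem bipartization_gives_preliminary_partition
    [Fintype V] [Fintype E]
    (x y : E → V) (hloop : ∀ e : E, x e ≠ y e)
    (T : Set E) (f : E → ZMod 2) (k : ℕ) (e₀ : E) (he₀ : e₀ ∈ T)
    (S : Set (GEdge T f e₀ k)) (hS : S.ncard ≤ k)
    (AS : Set (V ⊕ E))
    (hbip : ∀ p : GEdge T f e₀ k, p ∉ S →
      Xor' (xG' x y T f e₀ k p ∈ AS) (yG' x y T f e₀ k p ∈ AS)) :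
    Preliminary x y f T k e₀ {v : V | Sum.inl v ∈ AS} := by
  classical
  haveI : Finite (GEdge T f e₀ k) := Subtype.finite
  have hne01 : (0 : ZMod 2) ≠ 1 := by decide
  have key : ∀ (e' : E) (b : Bool),
      (∀ i : Fin (k + 1), ValidIdx T f e₀ k (e', i, b)) →
      Xor' ((if b then Sum.inl (y e') else Sum.inl (x e')) ∈ AS)
        ((if NeedsNew T f e₀ e' then (Sum.inr e' : V ⊕ E) else Sum.inl (y e')) ∈ AS) := by
    intro e' b hv
    obtain ⟨i, hi⟩ := exists_group_not_mem' hS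
      (fun i => (⟨(e', i, b), hv i⟩ : GEdge T f e₀ k))
      (fun i j hij => by
        have := congrArg (fun p : GEdge T f e₀ k => p.1.2.1) hij
        simpa using this)
    simpa [xG', yG'] using hbip _ hi
  have hNNe₀ : NeedsNew T f e₀ e₀ ↔ f e₀ = 1 := by
    constructor
    · rintro (⟨h, _⟩ | ⟨_, h⟩ | ⟨_, h, _⟩)
      · exact absurd he₀ h
      · exact h
      · exact absurd rfl h
    · intro h; exact Or.inr (Or.inl ⟨rfl, h⟩)
  have hc₀ : Contrib x y f {v : V | Sum.inl v ∈ AS} e₀ := by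
    rcases zmod2_cases' (f e₀) with h0 | h1
    · have hv : ∀ i : Fin (k + 1), ValidIdx T f e₀ k (e₀, i, false) :=
        fun i => Or.inr (Or.inr (Or.inl ⟨rfl, h0, rfl⟩))
      have X := key e₀ false hv
      rw [if_neg (fun h => hne01 (h0.symm.trans (hNNe₀.1 h)))] at X
      simp only [Bool.false_eq_true, if_false, Xor', xor_def] at X
      simp only [Contrib, Set.mem_setOf_eq]
      tauto
    · have hv : ∀ i : Fin (k + 1), ValidIdx T f e₀ k (e₀, i, true) :=
        fun i => Or.inr (Or.inr (Or.inr (Or.inl ⟨rfl, h1⟩)))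
      have hv' : ∀ i : Fin (k + 1), ValidIdx T f e₀ k (e₀, i, false) :=
        fun i => Or.inr (Or.inr (Or.inr (Or.inl ⟨rfl, h1⟩)))
      have X1 := key e₀ false hv'
      have X2 := key e₀ true hv
      rw [if_pos (hNNe₀.2 h1)] at X1 X2
      simp only [Bool.false_eq_true, if_false, if_true, Xor', xor_def] at X1 X2
      simp only [Contrib, Set.mem_setOf_eq]
      tauto
  have hother : ∀ e' ∈ T, e' ≠ e₀ → ¬ Contrib x y f {v : V | Sum.inl v ∈ AS} e' := by
    intro e' hT hne hc
    have hNN : NeedsNew T f e₀ e' ↔ f e' = 0 := by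
      constructor
      · rintro (⟨h, _⟩ | ⟨h, _⟩ | ⟨_, _, h⟩)
        · exact absurd hT h
        · exact absurd h hne
        · exact h
      · intro h; exact Or.inr (Or.inr ⟨hT, hne, h⟩)
    simp only [Contrib, Set.mem_setOf_eq] at hc
    rcases zmod2_cases' (f e') with h0 | h1
    · have hv : ∀ (b : Bool) (i : Fin (k + 1)), ValidIdx T f e₀ k (e', i, b) :=
        fun b i => Or.inr (Or.inr (Or.inr (Or.inr (Or.inr ⟨hT, hne, h0⟩))))
      have X1 := key e' false (hv false)
      have X2 := key e' true (hv true)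
      rw [if_pos (hNN.2 h0)] at X1 X2
      simp only [Bool.false_eq_true, if_false, if_true, Xor', xor_def] at X1 X2
      rw [h0] at hc
      tauto
    · have hv : ∀ i : Fin (k + 1), ValidIdx T f e₀ k (e', i, false) :=
        fun i => Or.inr (Or.inr (Or.inr (Or.inr (Or.inl ⟨hT, hne, h1, rfl⟩))))
      have X := key e' false hv
      rw [if_neg (fun h => hne01 ((hNN.1 h).symm.trans h1))] at X
      simp only [Bool.false_eq_true, if_false, Xor', xor_def] at X
      rw [h1] at hc
      tauto
  refine ⟨hc₀, hother, ?_⟩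
  set A : Set E := {e' : E | Contrib x y f {v : V | Sum.inl v ∈ AS} e' ∧ e' ≠ e₀} with hA
  have hmem : ∀ e' ∈ A, ∃ p : GEdge T f e₀ k, p ∈ S ∧ p.1.1 = e' := by
    intro e' he'
    obtain ⟨hc, hne⟩ := he'
    have hTn : e' ∉ T := fun hT => hother e' hT hne hc
    have hNN : NeedsNew T f e₀ e' ↔ f e' = 0 := by
      constructor
      · rintro (⟨_, h⟩ | ⟨h, _⟩ | ⟨h, _, _⟩)
        · exact h
        · exact absurd (h ▸ he₀) hTn
        · exact absurd h hTn
      · intro h; exact Or.inl ⟨hTn, h⟩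
    simp only [Contrib, Set.mem_setOf_eq] at hc
    rcases zmod2_cases' (f e') with h0 | h1
    · -- subdivided edge: one of the two half-edges must be in S
      have hvf : ValidIdx T f e₀ k (e', 0, false) := Or.inr (Or.inl ⟨hTn, h0, rfl⟩)
      have hvt : ValidIdx T f e₀ k (e', 0, true) := Or.inr (Or.inl ⟨hTn, h0, rfl⟩)
      by_cases hf : (⟨(e', 0, false), hvf⟩ : GEdge T f e₀ k) ∈ S
      · exact ⟨_, hf, rfl⟩
      by_cases ht : (⟨(e', 0, true), hvt⟩ : GEdge T f e₀ k) ∈ S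
      · exact ⟨_, ht, rfl⟩
      exfalso
      have X1 := hbip _ hf
      have X2 := hbip _ ht
      simp only [xG', yG', if_pos (hNN.2 h0), Bool.false_eq_true, if_false, if_true,
        Xor', xor_def] at X1 X2
      rw [h0] at hc
      tauto
    · have hv : ValidIdx T f e₀ k (e', 0, false) := Or.inl ⟨hTn, h1, rfl, rfl⟩
      by_cases hf : (⟨(e', 0, false), hv⟩ : GEdge T f e₀ k) ∈ S
      · exact ⟨_, hf, rfl⟩
      exfalso
      have X := hbip _ hf
      simp only [xG', yG', if_neg (fun h => hne01 ((hNN.1 h).symm.trans h1)),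
        Bool.false_eq_true, if_false, Xor', xor_def] at X
      rw [h1] at hc
      tauto
  choose g hg1 hg2 using hmem
  haveI : Nonempty (GEdge T f e₀ k) := by
    rcases zmod2_cases' (f e₀) with h0 | h1
    · exact ⟨⟨(e₀, 0, false), Or.inr (Or.inr (Or.inl ⟨rfl, h0, rfl⟩))⟩⟩
    · exact ⟨⟨(e₀, 0, false), Or.inr (Or.inr (Or.inr (Or.inl ⟨rfl, h1⟩)))⟩⟩
  have hle : A.ncard ≤ S.ncard := by
    apply Set.ncard_le_ncard_of_injOn (fun e' => if h : e' ∈ A then g e' h else Classical.arbitrary _)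
    · intro a ha
      simp only [dif_pos ha]
      exact hg1 a ha
    · intro a ha b hb hab
      simp only [dif_pos ha, dif_pos hb] at hab
      have := congrArg (fun p : GEdge T f e₀ k => p.1.1) hab
      simpa [hg2 a ha, hg2 b hb] using this
  exact hle.trans hS
end

section
/- Let G be a loopless finite multigraph, T ⊆ E(G), e ∈ T with an associated function f_e : E(G) → {0,1}, and k a non-negative integer. Then for any two e-preliminary partitions (Z,Z̄) and (Z',Z̄') of V(G), the number of edges of G with one endpoint in (Z∖Z')∪(Z̄∖Z̄') and the other endpoint in (Z∩Z')∪(Z̄∩Z̄') is at most 2(k+1). -/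
variable {V E : Type*}

/-- The set of edges with one endpoint in `X` and the other in `Y`. -/
def CrossEdges (x y : E → V) (X Y : Set V) : Set E :=
  {e : E | (x e ∈ X ∧ y e ∈ Y) ∨ (x e ∈ Y ∧ y e ∈ X)}

/-- The subgraph of the multigraph induced by the vertex set `S` is connected. -/
def InducedConnected (x y : E → V) (S : Set V) : Prop :=
  ∀ u ∈ S, ∀ v ∈ S, Relation.ReflTransGen
    (fun a b => a ∈ S ∧ b ∈ S ∧ ∃ e : E, (a = x e ∧ b = y e) ∨ (a = y e ∧ b = x e)) u v

/-- `(X, Xᶜ)` is a `(q, p)`-good edge separation: both sides have more than `q` vertices,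
at most `p` edges cross the partition, and both induced subgraphs are connected. -/
def GoodEdgeSep (x y : E → V) (q p : ℕ) (X : Set V) : Prop :=
  q < X.ncard ∧ q < Xᶜ.ncard ∧ (CrossEdges x y X Xᶜ).ncard ≤ p ∧
  InducedConnected x y X ∧ InducedConnected x y Xᶜ

/-- The multigraph is `(q, p)`-unbreakable: it has no `(q, p)`-good edge separation. -/
def Unbreakable (x y : E → V) (q p : ℕ) : Prop :=
  ¬ ∃ X : Set V, GoodEdgeSep x y q p X

/-- Two `e₀`-preliminary partitions `(Z, Z̄)` and `(Z', Z̄')` are `e₀`-aligned: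
`|(Z ∖ Z') ∪ (Z̄ ∖ Z̄')| ≤ q` and at most `2(k+1)` edges join
`(Z ∖ Z') ∪ (Z̄ ∖ Z̄')` to `(Z ∩ Z') ∪ (Z̄ ∩ Z̄')`. -/
def Aligned (x y : E → V) (q k : ℕ) (Z Z' : Set V) : Prop :=
  ((Z \ Z') ∪ (Zᶜ \ Z'ᶜ)).ncard ≤ q ∧
  (CrossEdges x y ((Z \ Z') ∪ (Zᶜ \ Z'ᶜ)) ((Z ∩ Z') ∪ (Zᶜ ∩ Z'ᶜ))).ncard ≤ 2 * (k + 1)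

/-- `(Z, Z̄)` and `(Z', Z̄')` are `e₀`-opposite if `(Z̄, Z)` and `(Z', Z̄')` are aligned. -/
def OppositePart (x y : E → V) (q k : ℕ) (Z Z' : Set V) : Prop :=
  Aligned x y q k Zᶜ Z'

/-- `(Z, Z̄)` and `(Z', Z̄')` are `e₀`-close if they are aligned or opposite. -/
def Close (x y : E → V) (q k : ℕ) (Z Z' : Set V) : Prop :=
  Aligned x y q k Z Z' ∨ OppositePart x y q k Z Z'

/-- Let `G` be a loopless finite multigraph, `T ⊆ E(G)`, `e₀ ∈ T` with
associated function `f`, and `k ∈ ℕ`. For any two `e₀`-preliminary partitions `(Z, Z̄)`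
and `(Z', Z̄')` of `V(G)`, the number of edges with one endpoint in
`(Z ∖ Z') ∪ (Z̄ ∖ Z̄')` and the other in `(Z ∩ Z') ∪ (Z̄ ∩ Z̄')` is at most `2(k+1)`. -/
theorem crossEdges_of_preliminary_partitions_le
    [Fintype V] [Fintype E]
    (x y : E → V) (hloop : ∀ e : E, x e ≠ y e)
    (T : Set E) (e₀ : E) (he₀ : e₀ ∈ T) (f : E → ZMod 2) (k : ℕ)
    (Z Z' : Set V)
    (hZ : Preliminary x y f T k e₀ Z) (hZ' : Preliminary x y f T k e₀ Z') :
    (CrossEdges x y ((Z \ Z') ∪ (Zᶜ \ Z'ᶜ)) ((Z ∩ Z') ∪ (Zᶜ ∩ Z'ᶜ))).ncard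
      ≤ 2 * (k + 1) := by
  classical
  obtain ⟨hZc, hZT, hZk⟩ := hZ
  obtain ⟨hZ'c, hZ'T, hZ'k⟩ := hZ'
  have hsub : CrossEdges x y ((Z \ Z') ∪ (Zᶜ \ Z'ᶜ)) ((Z ∩ Z') ∪ (Zᶜ ∩ Z'ᶜ)) ⊆
      {e' : E | Contrib x y f Z e'} ∪ {e' : E | Contrib x y f Z' e'} := by
    intro e' he'
    have hf : f e' = 0 ∨ f e' = 1 := by
      have h2 : ∀ a : ZMod 2, a = 0 ∨ a = 1 := by decide
      exact h2 _
    simp only [CrossEdges, Set.mem_setOf_eq, Set.mem_union, Set.mem_diff,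
      Set.mem_inter_iff, Set.mem_compl_iff, not_not] at he'
    simp only [Set.mem_union, Set.mem_setOf_eq, Contrib]
    by_cases ha : x e' ∈ Z <;> by_cases hb : x e' ∈ Z' <;>
      by_cases hc : y e' ∈ Z <;> by_cases hd : y e' ∈ Z' <;>
      rcases hf with h | h <;> simp_all
  have key : ∀ W : Set V, Contrib x y f W e₀ →
      {e' : E | Contrib x y f W e' ∧ e' ≠ e₀}.ncard ≤ k →
      {e' : E | Contrib x y f W e'}.ncard ≤ k + 1 := by
    intro W hc hk
    have hs : {e' : E | Contrib x y f W e'} ⊆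
        {e' : E | Contrib x y f W e' ∧ e' ≠ e₀} ∪ {e₀} := by
      intro a ha
      by_cases h : a = e₀
      · exact Or.inr h
      · exact Or.inl ⟨ha, h⟩
    calc {e' : E | Contrib x y f W e'}.ncard
        ≤ ({e' : E | Contrib x y f W e' ∧ e' ≠ e₀} ∪ {e₀}).ncard :=
          Set.ncard_le_ncard hs (Set.toFinite _)
      _ ≤ {e' : E | Contrib x y f W e' ∧ e' ≠ e₀}.ncard + ({e₀} : Set E).ncard :=
          Set.ncard_union_le _ _
      _ ≤ k + 1 := by rw [Set.ncard_singleton]; omega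
  have h1 := key Z hZc hZk
  have h2 := key Z' hZ'c hZ'k
  calc (CrossEdges x y ((Z \ Z') ∪ (Zᶜ \ Z'ᶜ)) ((Z ∩ Z') ∪ (Zᶜ ∩ Z'ᶜ))).ncard
      ≤ ({e' : E | Contrib x y f Z e'} ∪ {e' : E | Contrib x y f Z' e'}).ncard :=
        Set.ncard_le_ncard hsub (Set.toFinite _)
    _ ≤ {e' : E | Contrib x y f Z e'}.ncard + {e' : E | Contrib x y f Z' e'}.ncard :=
        Set.ncard_union_le _ _
    _ ≤ 2 * (k + 1) := by omega
end

section
/- Let G be a finite simple graph, k ≥ 2 an integer, and X_1,…,X_k a partition of V(G) into sets each of which is independent in G. Construct the simple graph G' with vertex set V(G) ∪ {u_1,…,u_k} ∪ {x_1,…,x_k} ∪ {y_{ij} : 1 ≤ i < j ≤ k} (all new vertices distinct), whose edges are: all edges of G; the edge u_i v for every i ∈ {1,…,k} and every v ∈ X_i; and the edge u_i u_j for all 1 ≤ i < j ≤ k (the vertices x_1,…,x_k and y_{ij} are isolated). Let S = {u_iu_j : 1 ≤ i < j ≤ k} ⊆ E(G'). Let I(G') be the incidence matrix of G' over GF(2),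 and let P be the matrix over GF(2) with rows indexed by V(G') and columns indexed by E(G') defined by: the entry in row x_i and column e is 1 if and only if e = u_i v for some v ∈ X_i, or e = u_su_t with i ∈ {s,t}; the entry in row y_{ij} and column e is 1 if and only if e is an edge of G with one endpoint in X_i and the other in X_j, or e = u_iu_j; all other entries of P are 0. Let A = I(G') + P and k' = k(k+1)/2. Then G has a clique K with |K ∩ X_i| = 1 for every i ∈ {1,…,k} if and only if there exists a set F ⊆ E(G')∖S with |F| ≤ k' such that for every e ∈ S the column A^e lies in the GF(2)-span of the columns {A^f : f ∈ F}. -/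
open Matrix

attribute [local instance] Classical.propDecidable

/-- The vertex set of the graph `G'` in the Multicolored Clique reduction:
the original vertices of `G`, the vertices `u_1, …, u_k`, the vertices `x_1, …, x_k`
and the vertices `y_{ij}` for `1 ≤ i < j ≤ k`. -/
abbrev MCVert (V : Type*) (k : ℕ) : Type _ :=
  V ⊕ Fin k ⊕ Fin k ⊕ {p : Fin k × Fin k // p.1 < p.2}

/-- The edge set of the graph `G'`: the edges of `G`, one edge `u_{σ v} v` for each
vertex `v` of `G` (these are exactly the edges `u_i v` with `v ∈ X_i`), and the edges
`u_i u_j` for `1 ≤ i < j ≤ k` (the set `S`). The vertices `x_i` and `y_{ij}` are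
isolated. -/
abbrev MCEdge {V : Type*} (G : SimpleGraph V) (k : ℕ) : Type _ :=
  ↥G.edgeSet ⊕ V ⊕ {p : Fin k × Fin k // p.1 < p.2}

/-- The incidence matrix of `G'` over GF(2). -/
noncomputable def incMC {V : Type*} (G : SimpleGraph V) (k : ℕ) (σ : V → Fin k) :
    Matrix (MCVert V k) (MCEdge G k) (ZMod 2) :=
  fun w e =>
    match e with
    | Sum.inl s => if ∃ v : V, w = Sum.inl v ∧ v ∈ (s : Sym2 V) then 1 else 0
    | Sum.inr (Sum.inl v) =>
        if w = Sum.inl v ∨ w = Sum.inr (Sum.inl (σ v)) then 1 else 0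
    | Sum.inr (Sum.inr p) =>
        if w = Sum.inr (Sum.inl p.1.1) ∨ w = Sum.inr (Sum.inl p.1.2) then 1 else 0

/-- The perturbation matrix `P` of the Multicolored Clique reduction. Its nonzero rows are
indexed by the vertices `x_i` and `y_{ij}`: the entry in row `x_i` and column `e` is `1`
iff `e = u_i v` with `v ∈ X_i` or `e = u_s u_t` with `i ∈ {s, t}`; the entry in row
`y_{ij}` and column `e` is `1` iff `e` is an edge of `G` between `X_i` and `X_j`, or
`e = u_i u_j`. -/
noncomputable def pertMC {V : Type*} (G : SimpleGraph V) (k : ℕ) (σ : V → Fin k) :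
    Matrix (MCVert V k) (MCEdge G k) (ZMod 2) :=
  fun w e =>
    match w with
    | Sum.inr (Sum.inr (Sum.inl i)) =>
        match e with
        | Sum.inr (Sum.inl v) => if σ v = i then 1 else 0
        | Sum.inr (Sum.inr p) => if p.1.1 = i ∨ p.1.2 = i then 1 else 0
        | _ => 0
    | Sum.inr (Sum.inr (Sum.inr q)) =>
        match e with
        | Sum.inl s =>
            if ∃ a b : V, (s : Sym2 V) = s(a, b) ∧ σ a = q.1.1 ∧ σ b = q.1.2
            then 1 else 0
        | Sum.inr (Sum.inr p) => if p = q then 1 else 0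
        | _ => 0
    | _ => 0

lemma sigUnique {V : Type*} {k : ℕ} (σ : V → Fin k) (a b : V) (hab : σ a < σ b)
    (q : {p : Fin k × Fin k // p.1 < p.2}) :
    (∃ x y : V, (s(a,b) : Sym2 V) = s(x, y) ∧ σ x = q.1.1 ∧ σ y = q.1.2) ↔ q.1 = (σ a, σ b) := by
  constructor
  · rintro ⟨x, y, hxy, h1, h2⟩
    rw [Sym2.eq_iff] at hxy
    rcases hxy with ⟨rfl, rfl⟩ | ⟨rfl, rfl⟩
    · exact Prod.ext h1.symm h2.symm
    · exact absurd (h1 ▸ h2 ▸ q.2) (lt_asymm hab)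
  · intro h; exact ⟨a, b, rfl, by simp [h], by simp [h]⟩

lemma col_identity {V : Type*} (G : SimpleGraph V) (k : ℕ) (σ : V → Fin k)
    (p : {p : Fin k × Fin k // p.1 < p.2}) (a b : V)
    (ha : σ a = p.1.1) (hb : σ b = p.1.2) (he : s(a,b) ∈ G.edgeSet) (w : MCVert V k) :
    (incMC G k σ + pertMC G k σ) w (Sum.inr (Sum.inr p)) =
      (incMC G k σ + pertMC G k σ) w (Sum.inl ⟨s(a,b), he⟩) +
      (incMC G k σ + pertMC G k σ) w (Sum.inr (Sum.inl a)) +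
      (incMC G k σ + pertMC G k σ) w (Sum.inr (Sum.inl b)) := by
  have hablt : σ a < σ b := by rw [ha, hb]; exact p.2
  have hab : a ≠ b := fun h => by rw [h] at hablt; exact lt_irrefl _ hablt
  obtain w | i | i | q := w
  · simp only [incMC, pertMC, Matrix.add_apply, Sum.inl.injEq, exists_eq_left',
      reduceCtorEq, or_false, false_or, Sym2.mem_iff, add_zero, zero_add, if_false]
    by_cases h1 : w = a <;> by_cases h2 : w = b <;> simp_all <;> decide
  · simp only [incMC, pertMC, Matrix.add_apply, Sum.inr.injEq, Sum.inl.injEq,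
      reduceCtorEq, false_or, or_false, add_zero, zero_add, if_false, ha, hb]
    by_cases h1 : i = p.1.1 <;> by_cases h2 : i = p.1.2 <;>
      simp_all [(show p.1.1 ≠ p.1.2 from ne_of_lt p.2)] <;> decide
  · simp only [incMC, pertMC, Matrix.add_apply, reduceCtorEq, Sum.inr.injEq, or_self,
      if_false, zero_add, add_zero, ha, hb]
    by_cases h1 : p.1.1 = i <;> by_cases h2 : p.1.2 = i <;>
      simp_all [(show p.1.1 ≠ p.1.2 from ne_of_lt p.2)] <;> decide
  · simp only [incMC, pertMC, Matrix.add_apply, reduceCtorEq, Sum.inr.injEq, or_self,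
      if_false, zero_add, add_zero, false_and, exists_false, false_or, and_false]
    rw [sigUnique σ a b hablt q, ha, hb]
    rcases eq_or_ne p q with rfl | h
    · simp
    · have h2 : ¬ q.1 = (p.1.1, p.1.2) := fun hh => h (Subtype.ext ((hh.trans (Prod.mk.eta)).symm))
      simp [h, h2]
lemma cardP2 (k : ℕ) : Fintype.card {p : Fin k × Fin k // p.1 < p.2} = k * (k - 1) / 2 := by
  rw [Fintype.card_subtype]
  rw [Finset.card_eq_sum_card_fiberwise (f := Prod.snd) (t := Finset.univ) (fun x _ => Finset.mem_univ _)]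
  have h : ∀ b : Fin k, {a ∈ (Finset.univ.filter fun p : Fin k × Fin k => p.1 < p.2) | a.2 = b}.card = b.val := by
    intro b
    have hemb : (Finset.Iio b).map ⟨fun a => (a, b), fun x y h => by simpa using congrArg Prod.fst h⟩
        = {a ∈ (Finset.univ.filter fun p : Fin k × Fin k => p.1 < p.2) | a.2 = b} := by
      ext p
      simp only [Finset.mem_map, Finset.mem_Iio, Finset.mem_filter, Finset.mem_univ, true_and,
        Function.Embedding.coeFn_mk]
      constructor
      · rintro ⟨a, ha, rfl⟩; exact ⟨ha, rfl⟩
      · rintro ⟨h1, rfl⟩; exact ⟨p.1, h1, rfl⟩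
    rw [← hemb, Finset.card_map, Fin.card_Iio]
  rw [Finset.sum_congr rfl fun b _ => h b]
  rw [Fin.sum_univ_eq_sum_range (fun i => i), Finset.sum_range_id]

lemma tri (k : ℕ) (hk : 1 ≤ k) : k + k * (k - 1) / 2 = k * (k + 1) / 2 := by
  obtain ⟨n, rfl⟩ : ∃ n, k = n + 1 := ⟨k - 1, by omega⟩
  obtain ⟨c, hc⟩ : 2 ∣ n * (n + 1) := (Nat.even_mul_succ_self n).two_dvd
  have e1 : (n+1) * (n+1+1) = n * (n+1) + 2 * (n+1) := by ring
  have e2 : (n+1) * (n+1-1) = n * (n+1) := by rw [Nat.add_sub_cancel, mul_comm]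
  rw [e1, e2, hc]
  omega


/-- Correctness of the W[1]-hardness reduction from Multicolored Clique:
for a finite simple graph `G`, `k ≥ 2`, and a partition of `V(G)` into independent sets
`X_1, …, X_k` (given by the colouring `σ`), with `A = I(G') + P` and `k' = k(k+1)/2`,
the graph `G` has a clique meeting every `X_i` in exactly one vertex if and only if there
is a set `F` of non-terminal columns of `A` with `|F| ≤ k'` spanning every terminal
column `A^{u_i u_j}`. -/
theorem multicoloredClique_iff_spaceCoverPGM
    {V : Type*} [Fintype V] [DecidableEq V]
    (G : SimpleGraph V) (k : ℕ) (hk : 2 ≤ k) (σ : V → Fin k)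
    (hind : ∀ u v : V, σ u = σ v → ¬ G.Adj u v)
    (A : Matrix (MCVert V k) (MCEdge G k) (ZMod 2))
    (hA : A = incMC G k σ + pertMC G k σ)
    (k' : ℕ) (hk' : k' = k * (k + 1) / 2) :
    (∃ K : Finset V, G.IsClique (K : Set V) ∧
        ∀ i : Fin k, (K.filter fun v => σ v = i).card = 1) ↔
      (∃ F : Set (MCEdge G k),
        Disjoint F (Set.range fun p : {p : Fin k × Fin k // p.1 < p.2} =>
          (Sum.inr (Sum.inr p) : MCEdge G k)) ∧
        F.ncard ≤ k' ∧
        ∀ p : {p : Fin k × Fin k // p.1 < p.2},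
          Aᵀ (Sum.inr (Sum.inr p)) ∈
            Submodule.span (ZMod 2) ((fun e : MCEdge G k => Aᵀ e) '' F)) := by
  subst hA
  subst hk'
  constructor
  · rintro ⟨K, hKc, hKf⟩
    have hv : ∀ i, ∃ a, K.filter (fun v => σ v = i) = {a} := fun i =>
      Finset.card_eq_one.mp (hKf i)
    choose v hv using hv
    have hvK : ∀ i, v i ∈ K ∧ σ (v i) = i := fun i => by
      have : v i ∈ K.filter (fun w => σ w = i) := (hv i) ▸ Finset.mem_singleton_self _
      simpa using this
    have hσv : ∀ i, σ (v i) = i := fun i => (hvK i).2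
    have hvinj : Function.Injective v := fun i j h => by rw [← hσv i, ← hσv j, h]
    have hadj : ∀ p : {p : Fin k × Fin k // p.1 < p.2}, G.Adj (v p.1.1) (v p.1.2) := by
      intro p
      refine hKc (by simp [(hvK p.1.1).1]) (by simp [(hvK p.1.2).1])
        (fun h => absurd (hvinj h) (ne_of_lt p.2))
    refine ⟨(Set.range fun p : {p : Fin k × Fin k // p.1 < p.2} =>
        (Sum.inl ⟨s(v p.1.1, v p.1.2), (G.mem_edgeSet).2 (hadj p)⟩ : MCEdge G k)) ∪
        (Set.range fun i : Fin k => (Sum.inr (Sum.inl (v i)) : MCEdge G k)), ?_, ?_, ?_⟩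
    · rw [Set.disjoint_left]
      rintro e (⟨p, rfl⟩ | ⟨i, rfl⟩) ⟨q, hq⟩ <;> simp at hq
    · refine le_trans (Set.ncard_union_le _ _) ?_
      have h1 : (Set.range fun p : {p : Fin k × Fin k // p.1 < p.2} =>
          (Sum.inl ⟨s(v p.1.1, v p.1.2), (G.mem_edgeSet).2 (hadj p)⟩ : MCEdge G k)).ncard
          ≤ k * (k-1) / 2 := by
        rw [← Set.image_univ]
        refine le_trans (Set.ncard_image_le Set.finite_univ) ?_
        rw [Set.ncard_univ, Nat.card_eq_fintype_card, cardP2]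
      have h2 : (Set.range fun i : Fin k => (Sum.inr (Sum.inl (v i)) : MCEdge G k)).ncard ≤ k := by
        rw [← Set.image_univ]
        refine le_trans (Set.ncard_image_le Set.finite_univ) ?_
        rw [Set.ncard_univ, Nat.card_eq_fintype_card, Fintype.card_fin]
      have := tri k (by omega)
      omega
    · intro p
      have hid : (incMC G k σ + pertMC G k σ)ᵀ (Sum.inr (Sum.inr p)) =
          (incMC G k σ + pertMC G k σ)ᵀ
            (Sum.inl ⟨s(v p.1.1, v p.1.2), (G.mem_edgeSet).2 (hadj p)⟩) +
          (incMC G k σ + pertMC G k σ)ᵀ (Sum.inr (Sum.inl (v p.1.1))) +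
          (incMC G k σ + pertMC G k σ)ᵀ (Sum.inr (Sum.inl (v p.1.2))) := by
        funext w
        exact col_identity G k σ p (v p.1.1) (v p.1.2) (hσv _) (hσv _) _ w
      rw [hid]
      refine Submodule.add_mem _ (Submodule.add_mem _ ?_ ?_) ?_ <;>
        apply Submodule.subset_span
      exacts [⟨_, Or.inl ⟨p, rfl⟩, rfl⟩, ⟨_, Or.inr ⟨p.1.1, rfl⟩, rfl⟩,
        ⟨_, Or.inr ⟨p.1.2, rfl⟩, rfl⟩]
  · rintro ⟨F, hdisj, hcard, hspan⟩
    have hrep : ∀ p : {p : Fin k × Fin k // p.1 < p.2}, ∃ l : MCEdge G k →₀ ZMod 2,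
        ↑l.support ⊆ F ∧
        ∀ w, (∑ e ∈ l.support, l e * (incMC G k σ + pertMC G k σ) w e)
          = (incMC G k σ + pertMC G k σ) w (Sum.inr (Sum.inr p)) := by
      intro p
      obtain ⟨l, hl1, hl2⟩ := (Finsupp.mem_span_image_iff_linearCombination (ZMod 2)).mp (hspan p)
      refine ⟨l, (Finsupp.mem_supported (ZMod 2) l).mp hl1, fun w => ?_⟩
      rw [Finsupp.linearCombination_apply, Finsupp.sum] at hl2
      have h := congrFun hl2 w
      simpa [Matrix.transpose_apply, Finset.sum_apply, smul_eq_mul] using h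
    have claimA' : ∀ p : {p : Fin k × Fin k // p.1 < p.2}, ∀ m : Fin k,
        m = p.1.1 ∨ m = p.1.2 →
        ∃ a : V, (Sum.inr (Sum.inl a) : MCEdge G k) ∈ F ∧ σ a = m := by
      intro p m hm
      obtain ⟨l, hls, hlw⟩ := hrep p
      by_contra hno
      push_neg at hno
      have hz : ∑ e ∈ l.support, l e * (incMC G k σ + pertMC G k σ) (Sum.inr (Sum.inl m)) e = 0 := by
        refine Finset.sum_eq_zero fun e he => ?_
        have heF : e ∈ F := hls he
        obtain s | a | q := e
        · simp [incMC, pertMC, Matrix.add_apply]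
        · have h1 : σ a ≠ m := hno a heF
          simp [incMC, pertMC, Matrix.add_apply, Ne.symm h1]
        · exact absurd ⟨q, rfl⟩ (Set.disjoint_left.mp hdisj heF)
      rw [hlw (Sum.inr (Sum.inl m))] at hz
      rcases hm with rfl | rfl <;> simp [incMC, pertMC, Matrix.add_apply] at hz
    have claimB : ∀ p : {p : Fin k × Fin k // p.1 < p.2},
        ∃ s : G.edgeSet, (Sum.inl s : MCEdge G k) ∈ F ∧
          ∃ a b : V, (s : Sym2 V) = s(a, b) ∧ σ a = p.1.1 ∧ σ b = p.1.2 := by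
      intro p
      obtain ⟨l, hls, hlw⟩ := hrep p
      by_contra hno
      push_neg at hno
      have hz : ∑ e ∈ l.support, l e * (incMC G k σ + pertMC G k σ)
          (Sum.inr (Sum.inr (Sum.inr p))) e = 0 := by
        refine Finset.sum_eq_zero fun e he => ?_
        have heF : e ∈ F := hls he
        obtain s | a | q := e
        · have h1 : ¬ ∃ a b : V, (s : Sym2 V) = s(a, b) ∧ σ a = p.1.1 ∧ σ b = p.1.2 := by
            rintro ⟨a, b, hx1, hx2, hx3⟩
            exact hno s heF a b hx1 hx2 hx3
          simp [incMC, pertMC, Matrix.add_apply, h1]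
        · simp [incMC, pertMC, Matrix.add_apply]
        · exact absurd ⟨q, rfl⟩ (Set.disjoint_left.mp hdisj heF)
      rw [hlw (Sum.inr (Sum.inr (Sum.inr p)))] at hz
      simp [incMC, pertMC, Matrix.add_apply] at hz
    have hpair : ∀ i : Fin k, ∃ p : {p : Fin k × Fin k // p.1 < p.2}, i = p.1.1 ∨ i = p.1.2 := by
      intro i
      rcases lt_or_ge (i.val + 1) k with h | h
      · exact ⟨⟨(i, ⟨i.val + 1, h⟩), by simp [Fin.lt_def]⟩, Or.inl rfl⟩
      · have h0 : (0 : ℕ) < i.val := by omega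
        exact ⟨⟨(⟨0, by omega⟩, i), by simpa [Fin.lt_def] using h0⟩, Or.inr rfl⟩
    have claimA : ∀ i : Fin k, ∃ a : V, (Sum.inr (Sum.inl a) : MCEdge G k) ∈ F ∧ σ a = i := by
      intro i
      obtain ⟨p, hp⟩ := hpair i
      exact claimA' p i hp
    choose v hvF hσv using claimA
    choose ed hedF ea eb hseq hσa hσb using claimB
    have hvinj : Function.Injective v := fun i j h => by rw [← hσv i, ← hσv j, h]
    have hedinj : Function.Injective ed := by
      intro p q h
      have hs : s(ea p, eb p) = s(ea q, eb q) := by rw [← hseq p, ← hseq q, h]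
      rw [Sym2.eq_iff] at hs
      rcases hs with ⟨h1, h2⟩ | ⟨h1, h2⟩
      · refine Subtype.ext (Prod.ext ?_ ?_)
        · rw [← hσa p, ← hσa q, h1]
        · rw [← hσb p, ← hσb q, h2]
      · exfalso
        have hp2 := p.2
        have hq2 := q.2
        rw [← hσa p, ← hσb p, h1, h2, hσa q, hσb q] at hp2
        exact lt_asymm hp2 hq2
    set Φ : Fin k ⊕ {p : Fin k × Fin k // p.1 < p.2} → MCEdge G k :=
      Sum.elim (fun i => Sum.inr (Sum.inl (v i))) (fun p => Sum.inl (ed p)) with hΦ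
    have hΦinj : Function.Injective Φ := by
      intro x y h
      match x, y with
      | Sum.inl i, Sum.inl j =>
        exact congrArg (Sum.inl : Fin k → Fin k ⊕ {p : Fin k × Fin k // p.1 < p.2})
          (hvinj (by simpa [hΦ] using h))
      | Sum.inl i, Sum.inr q => exact absurd h (by simp [hΦ])
      | Sum.inr p, Sum.inl j => exact absurd h (by simp [hΦ])
      | Sum.inr p, Sum.inr q =>
        exact congrArg (Sum.inr : {p : Fin k × Fin k // p.1 < p.2} → Fin k ⊕ {p : Fin k × Fin k // p.1 < p.2})
          (hedinj (by simpa [hΦ] using h))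
    have hΦsub : Set.range Φ ⊆ F := by
      rintro e ⟨x, rfl⟩
      obtain i | p := x
      · exact hvF i
      · exact hedF p
    have hΦcard : (Set.range Φ).ncard = k + k * (k - 1) / 2 := by
      rw [← Set.image_univ, Set.ncard_image_of_injective _ hΦinj, Set.ncard_univ,
        Nat.card_eq_fintype_card, Fintype.card_sum, Fintype.card_fin, cardP2]
    have hFeq : Set.range Φ = F := by
      refine Set.eq_of_subset_of_ncard_le hΦsub ?_ (Set.toFinite F)
      rw [hΦcard]
      have := tri k (by omega)
      omega
    have hadj : ∀ p : {p : Fin k × Fin k // p.1 < p.2}, G.Adj (v p.1.1) (v p.1.2) := by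
      intro p
      obtain ⟨l, hls, hlw⟩ := hrep p
      have hlsub : ↑l.support ⊆ Set.range Φ := hFeq ▸ hls
      have hsupval : ∀ t : MCEdge G k, (if t ∈ l.support then l t else 0) = l t := by
        intro t
        split_ifs with hh
        · rfl
        · exact (Finsupp.notMem_support_iff.mp hh).symm
      have ha : ∀ m : Fin k, l (Sum.inr (Sum.inl (v m)))
          = if m = p.1.1 ∨ m = p.1.2 then 1 else 0 := by
        intro m
        have h := hlw (Sum.inr (Sum.inl m))
        have hterm : ∀ e ∈ l.support,
            l e * (incMC G k σ + pertMC G k σ) (Sum.inr (Sum.inl m)) e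
            = if e = Sum.inr (Sum.inl (v m)) then l e else 0 := by
          intro e he
          obtain ⟨x, rfl⟩ := hlsub he
          obtain i | q := x
          · simp only [hΦ, Sum.elim_inl]
            rcases eq_or_ne i m with rfl | hne
            · simp [incMC, pertMC, Matrix.add_apply, hσv]
            · have h1 : v i ≠ v m := fun hh => hne (hvinj hh)
              have h2 : m ≠ σ (v i) := by rw [hσv]; exact Ne.symm hne
              simp [incMC, pertMC, Matrix.add_apply, h1, h2]
          · simp [hΦ, incMC, pertMC, Matrix.add_apply]
        rw [Finset.sum_congr rfl hterm, Finset.sum_ite_eq' l.support,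
          hsupval] at h
        simpa [incMC, pertMC, Matrix.add_apply] using h
      have hb : ∀ q : {p : Fin k × Fin k // p.1 < p.2}, l (Sum.inl (ed q))
          = if p = q then 1 else 0 := by
        intro q
        have h := hlw (Sum.inr (Sum.inr (Sum.inr q)))
        have hterm : ∀ e ∈ l.support,
            l e * (incMC G k σ + pertMC G k σ) (Sum.inr (Sum.inr (Sum.inr q))) e
            = if e = Sum.inl (ed q) then l e else 0 := by
          intro e he
          obtain ⟨x, rfl⟩ := hlsub he
          obtain i | q' := x
          · simp [hΦ, incMC, pertMC, Matrix.add_apply]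
          · simp only [hΦ, Sum.elim_inr]
            have hablt : σ (ea q') < σ (eb q') := by
              rw [hσa, hσb]; exact q'.2
            have hsig : (∃ a b : V, ((ed q' : Sym2 V) = s(a, b)) ∧ σ a = q.1.1 ∧ σ b = q.1.2)
                ↔ q.1 = (σ (ea q'), σ (eb q')) := by
              rw [hseq q']
              exact sigUnique σ (ea q') (eb q') hablt q
            rcases eq_or_ne q' q with rfl | hne
            · have : (∃ a b : V, ((ed q' : Sym2 V) = s(a, b)) ∧ σ a = q'.1.1 ∧ σ b = q'.1.2) :=
                ⟨ea q', eb q', hseq q', hσa q', hσb q'⟩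
              simp [incMC, pertMC, Matrix.add_apply, this]
            · have h1 : ¬ (∃ a b : V, ((ed q' : Sym2 V) = s(a, b)) ∧ σ a = q.1.1 ∧ σ b = q.1.2) := by
                intro hx
                have := (hsig.mp hx)
                rw [hσa, hσb] at this
                exact hne (Subtype.ext (this.trans (Prod.mk.eta))).symm
              have h2 : ed q' ≠ ed q := fun hh => hne (hedinj hh)
              simp [incMC, pertMC, Matrix.add_apply, h1, h2]
        rw [Finset.sum_congr rfl hterm, Finset.sum_ite_eq' l.support, hsupval] at h
        simpa [incMC, pertMC, Matrix.add_apply] using h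
      have hvne : v p.1.1 ≠ v p.1.2 := fun hh => (ne_of_lt p.2) (hvinj hh)
      have hsupp : l.support =
          {Sum.inl (ed p), Sum.inr (Sum.inl (v p.1.1)), Sum.inr (Sum.inl (v p.1.2))} := by
        ext e
        simp only [Finsupp.mem_support_iff, Finset.mem_insert, Finset.mem_singleton]
        constructor
        · intro he
          have heF : e ∈ Set.range Φ := hlsub (by simpa using he)
          obtain ⟨x, rfl⟩ := heF
          obtain i | q := x
          · have := ha i
            simp only [hΦ, Sum.elim_inl] at he ⊢
            rw [this] at he
            rcases (by by_contra hc; push_neg at hc; simp [hc] at he :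
              i = p.1.1 ∨ i = p.1.2) with rfl | rfl
            · exact Or.inr (Or.inl rfl)
            · exact Or.inr (Or.inr rfl)
          · have := hb q
            simp only [hΦ, Sum.elim_inr] at he ⊢
            rw [this] at he
            have : p = q := by by_contra hc; simp [hc] at he
            exact Or.inl (by rw [this])
        · rintro (rfl | rfl | rfl)
          · rw [hb p]; simp
          · rw [ha p.1.1]; simp
          · rw [ha p.1.2]; simp
      have hrow : ∀ w : V,
          (if w ∈ (ed p : Sym2 V) then (1 : ZMod 2) else 0)
          + ((if w = v p.1.1 then (1 : ZMod 2) else 0)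
            + (if w = v p.1.2 then (1 : ZMod 2) else 0)) = 0 := by
        intro w
        have h := hlw (Sum.inl w)
        rw [hsupp] at h
        rw [Finset.sum_insert (by simp), Finset.sum_insert (by simp [hvne]),
          Finset.sum_singleton] at h
        rw [hb p, ha p.1.1, ha p.1.2] at h
        have hRHS : (incMC G k σ + pertMC G k σ) (Sum.inl w) (Sum.inr (Sum.inr p)) = 0 := by
          simp [incMC, pertMC, Matrix.add_apply]
        have e1 : (incMC G k σ + pertMC G k σ) (Sum.inl w) (Sum.inl (ed p))
            = if w ∈ (ed p : Sym2 V) then 1 else 0 := by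
          simp [incMC, pertMC, Matrix.add_apply]
        have e2 : ∀ i : Fin k, (incMC G k σ + pertMC G k σ) (Sum.inl w) (Sum.inr (Sum.inl (v i)))
            = if w = v i then 1 else 0 := by
          intro i
          simp [incMC, pertMC, Matrix.add_apply]
        rw [e1, e2, e2, hRHS] at h
        simpa using h
      have hea : ea p = v p.1.1 := by
        have h := hrow (ea p)
        rw [if_pos (by rw [hseq p]; exact Sym2.mem_mk_left _ _)] at h
        have hne2 : ea p ≠ v p.1.2 := by
          intro hh
          have := hσa p
          rw [hh, hσv] at this
          exact (ne_of_lt p.2) this.symm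
        rw [if_neg hne2] at h
        by_contra hc
        rw [if_neg hc] at h
        simp at h
      have heb : eb p = v p.1.2 := by
        have h := hrow (eb p)
        rw [if_pos (by rw [hseq p]; exact Sym2.mem_mk_right _ _)] at h
        have hne2 : eb p ≠ v p.1.1 := by
          intro hh
          have := hσb p
          rw [hh, hσv] at this
          exact (ne_of_lt p.2) this
        rw [if_neg hne2] at h
        by_contra hc
        rw [if_neg hc] at h
        simp at h
      have := (ed p).2
      rw [hseq p, hea, heb] at this
      exact this
    refine ⟨Finset.image v Finset.univ, ?_, ?_⟩
    · intro x hx y hy hxy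
      simp only [Finset.coe_image, Finset.coe_univ, Set.image_univ, Set.mem_range] at hx hy
      obtain ⟨i, rfl⟩ := hx
      obtain ⟨j, rfl⟩ := hy
      have hij : i ≠ j := fun hh => hxy (by rw [hh])
      rcases lt_trichotomy i j with h | h | h
      · exact hadj ⟨(i, j), h⟩
      · exact absurd h hij
      · exact (hadj ⟨(j, i), h⟩).symm
    · intro i
      have hfe : (Finset.image v Finset.univ).filter (fun w => σ w = i) = {v i} := by
        ext w
        simp only [Finset.mem_filter, Finset.mem_image, Finset.mem_univ, true_and,
          Finset.mem_singleton]
        constructor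
        · rintro ⟨⟨m, rfl⟩, hw⟩
          rw [hσv] at hw
          rw [hw]
        · rintro rfl
          exact ⟨⟨i, rfl⟩, hσv i⟩
      rw [hfe, Finset.card_singleton]
end
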